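/- arXiv:1310.7873 — 11 statements merged into one kernel-verified Lean document; each statement's English description precedes it below -/
import Mathlib

section
/- Let R be a unique factorization domain that is also a ℂ-algebra, let g₁, …, g_ℓ ∈ R be pairwise non-associated irreducible elements, let k₁, …, k_ℓ ≥ 1 be integers, let u ∈ R be a unit, and set g = u·g₁^{k₁}⋯g_ℓ^{k_ℓ}. Then for every derivation D ∈ Derivation ℂ R R one has D g ∈ Ideal.span {g} if and only if D gᵢ ∈ Ideal.span {gᵢ} for every i = 1, …, ℓ. In other words, Der(−log g) = ⋂ᵢ Der(−log gᵢ). -/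
open Finset

/-- Auxiliary: derivations logarithmic along `a` and `b` are logarithmic along `a*b`. -/
private lemma log_mul {R : Type*} [CommRing R] [Algebra ℂ R]
    (D : Derivation ℂ R R) {a b : R} (ha : a ∣ D a) (hb : b ∣ D b) :
    a * b ∣ D (a * b) := by
  rw [Derivation.leibniz, smul_eq_mul, smul_eq_mul]
  exact dvd_add (mul_dvd_mul_left a hb) (by rw [mul_comm a b]; exact mul_dvd_mul_left b ha)

private lemma log_pow {R : Type*} [CommRing R] [Algebra ℂ R]
    (D : Derivation ℂ R R) {a : R} (ha : a ∣ D a) (n : ℕ) :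
    a ^ n ∣ D (a ^ n) := by
  induction n with
  | zero => simp
  | succ m ih => rw [pow_succ]; exact log_mul D ih ha

/-- For a UFD `R` that is a `ℂ`-algebra and `g = u * ∏ i, g i ^ k i` with `u` a unit and the
`g i` pairwise non-associated irreducible elements, a derivation `D` is logarithmic along `g`
(i.e. `D g ∈ (g)`) if and only if it is logarithmic along every `g i`. -/
theorem derivation_log_prod_pow_iff_forall
    {R : Type*} [CommRing R] [IsDomain R] [UniqueFactorizationMonoid R] [Algebra ℂ R]
    {ℓ : ℕ} (g : Fin ℓ → R) (k : Fin ℓ → ℕ)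
    (hirr : ∀ i, Irreducible (g i))
    (hassoc : ∀ i j, i ≠ j → ¬ Associated (g i) (g j))
    (hk : ∀ i, 1 ≤ k i)
    (u : Rˣ) (G : R) (hG : G = (u : R) * ∏ i, g i ^ k i)
    (D : Derivation ℂ R R) :
    D G ∈ Ideal.span {G} ↔ ∀ i, D (g i) ∈ Ideal.span {g i} := by
  simp only [Ideal.mem_span_singleton]
  set P : R := ∏ i, g i ^ k i with hP
  have hprime : ∀ i, Prime (g i) := fun i =>
    (UniqueFactorizationMonoid.irreducible_iff_prime).1 (hirr i)
  have hDG : D G = (u : R) * D P + P * D u := by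
    rw [hG, Derivation.leibniz, smul_eq_mul, smul_eq_mul]
  have hGdvd : ∀ x : R, G ∣ x ↔ P ∣ x := fun x => by
    rw [hG, mul_comm]; exact Units.mul_right_dvd
  have key : G ∣ D G ↔ P ∣ D P := by
    rw [hGdvd, hDG]
    constructor
    · intro h
      have h2 : P ∣ (u : R) * D P := (dvd_add_right (Dvd.intro _ rfl)).1 (by rwa [add_comm] at h)
      rwa [mul_comm, Units.dvd_mul_right] at h2
    · intro h
      exact dvd_add (Dvd.dvd.mul_left h _) (Dvd.intro _ rfl)
  rw [key]
  constructor
  · intro h i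
    -- split off the i-th factor
    set Q : R := ∏ j ∈ univ.erase i, g j ^ k j with hQ
    have hPQ : P = g i ^ k i * Q := by
      rw [hP, hQ]; exact (mul_prod_erase univ (fun j => g j ^ k j) (mem_univ i)).symm
    have hDgik : g i ^ k i ∣ D P := dvd_trans (hPQ ▸ Dvd.intro _ rfl) h
    have hDP : D P = g i ^ k i * D Q + Q * (k i * (g i ^ (k i - 1) * D (g i))) := by
      rw [hPQ, Derivation.leibniz, Derivation.leibniz_pow]
      simp only [smul_eq_mul, nsmul_eq_mul]
      try ring
    have h3 : g i ^ k i ∣ Q * (k i * (g i ^ (k i - 1) * D (g i))) := by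
      have := dvd_sub hDgik (Dvd.intro _ rfl : g i ^ k i ∣ g i ^ k i * D Q)
      rwa [hDP, add_sub_cancel_left] at this
    obtain ⟨m, hm⟩ : ∃ m, k i = m + 1 := ⟨k i - 1, (Nat.succ_pred_eq_of_pos (hk i)).symm⟩
    have hgne : g i ≠ 0 := (hirr i).ne_zero
    have h4 : g i ∣ Q * ((k i : R) * D (g i)) := by
      have hpow : (g i) ^ m ≠ 0 := pow_ne_zero _ hgne
      have h3' : g i ^ m * g i ∣ g i ^ m * (Q * ((k i : R) * D (g i))) := by
        calc g i ^ m * g i = g i ^ k i := by rw [hm, pow_succ]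
        _ ∣ Q * ((k i : R) * (g i ^ (k i - 1) * D (g i))) := h3
        _ = g i ^ m * (Q * ((k i : R) * D (g i))) := by
            rw [hm]; simp only [Nat.add_sub_cancel]; ring
      exact (mul_dvd_mul_iff_left hpow).1 h3' 
    -- g i does not divide Q
    have hQnd : ¬ g i ∣ Q := by
      intro hd
      obtain ⟨j, hj, hdj⟩ := (Prime.dvd_finset_prod_iff (hprime i) _).1 hd
      have : g i ∣ g j := (hprime i).dvd_of_dvd_pow hdj
      exact hassoc i j (fun hij => (mem_erase.1 hj).1 hij.symm)
        (Irreducible.associated_of_dvd (hirr i) (hirr j) this)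
    have hknd : ¬ g i ∣ (k i : R) := by
      intro hd
      have hku : IsUnit ((k i : ℕ) : R) := by
        have : ((k i : ℕ) : R) = algebraMap ℂ R ((k i : ℕ) : ℂ) := by
          rw [map_natCast]
        rw [this]
        exact (isUnit_iff_ne_zero.2 (Nat.cast_ne_zero.2 (by omega) :
          ((k i : ℕ) : ℂ) ≠ 0)).map (algebraMap ℂ R)
      exact (hirr i).not_isUnit (isUnit_of_dvd_unit hd hku)
    rcases (hprime i).dvd_or_dvd h4 with h5 | h5
    · exact absurd h5 hQnd
    rcases (hprime i).dvd_or_dvd h5 with h6 | h6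
    · exact absurd h6 hknd
    · exact h6
  · intro h
    refine Finset.prod_induction (fun i => g i ^ k i) (fun x => x ∣ D x)
      (fun a b ha hb => log_mul D ha hb) (by simp) ?_
    intro i _
    exact log_pow D (h i) (k i)
end

section
/- Let R be a unique factorization domain that is also a ℂ-algebra, let g₁, …, g_ℓ ∈ R be pairwise non-associated irreducible elements, let k₁, …, k_ℓ ≥ 1 be integers, let u ∈ R be a unit, and set g = u·g₁^{k₁}⋯g_ℓ^{k_ℓ}. Then for every derivation D ∈ Derivation ℂ R R one has D g ∈ Ideal.span {g} if and only if D(g₁⋯g_ℓ) ∈ Ideal.span {g₁⋯g_ℓ}; that is, Der(−log g) = Der(−log g₁⋯g_ℓ), so the module of logarithmic derivations of g coincides with that of its reduction. -/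
lemma deriv_prod {R : Type*} [CommRing R] [Algebra ℂ R] (D : Derivation ℂ R R)
    {ι : Type*} [DecidableEq ι] (s : Finset ι) (f : ι → R) :
    D (∏ i ∈ s, f i) = ∑ i ∈ s, (∏ j ∈ s.erase i, f j) * D (f i) := by
  induction s using Finset.induction_on with
  | empty => simp
  | @insert a s ha ih =>
    rw [Finset.prod_insert ha, Derivation.leibniz, ih, Finset.sum_insert ha,
      Finset.erase_insert ha, smul_eq_mul, smul_eq_mul, Finset.mul_sum]
    rw [add_comm]
    congr 1
    apply Finset.sum_congr rfl
    intro i hi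
    rw [Finset.erase_insert_of_ne (show a ≠ i from fun h => ha (h ▸ hi)), Finset.prod_insert]
    · ring
    · exact fun h => ha (Finset.mem_of_mem_erase h)

lemma key_log {R : Type*} [CommRing R] [IsDomain R] [Algebra ℂ R]
    {ℓ : ℕ} (g : Fin ℓ → R) (k : Fin ℓ → ℕ)
    (hp : ∀ i, Prime (g i))
    (hassoc : ∀ i j, i ≠ j → ¬ Associated (g i) (g j))
    (hk : ∀ i, 1 ≤ k i)
    (D : Derivation ℂ R R) :
    (∏ i, g i ^ k i) ∣ D (∏ i, g i ^ k i) ↔ ∀ i, g i ∣ D (g i) := by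
  have hprod : D (∏ i, g i ^ k i)
      = ∑ i, (∏ j ∈ Finset.univ.erase i, g j ^ k j) * D (g i ^ k i) :=
    deriv_prod D Finset.univ (fun i => g i ^ k i)
  have hpow : ∀ i, D (g i ^ k i) = (k i : R) * (g i ^ (k i - 1) * D (g i)) := by
    intro i
    rw [Derivation.leibniz_pow]
    simp only [nsmul_eq_mul, smul_eq_mul]
  have hkunit : ∀ i, IsUnit ((k i : R)) := by
    intro i
    have : ((k i : ℂ)) ≠ 0 := Nat.cast_ne_zero.mpr (by have := hk i; omega)
    have := (isUnit_iff_ne_zero.mpr this).map (algebraMap ℂ R)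
    simpa using this
  have hPi : ∀ i, ¬ g i ∣ ∏ j ∈ Finset.univ.erase i, g j ^ k j := by
    intro i hdvd
    obtain ⟨j, hj, hdj⟩ := (Prime.dvd_finset_prod_iff (hp i) _).mp hdvd
    have hji : j ≠ i := Finset.ne_of_mem_erase hj
    have : g i ∣ g j := (hp i).dvd_of_dvd_pow hdj
    exact hassoc i j (Ne.symm hji)
      ((hp i).irreducible.associated_of_dvd (hp j).irreducible this)
  constructor
  · intro h i
    -- g i ^ k i divides every term j ≠ i, and divides D F, so divides term i
    have hterm : (g i ^ k i) ∣
        (∏ j ∈ Finset.univ.erase i, g j ^ k j) * D (g i ^ k i) := by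
      have h1 : (g i ^ k i) ∣ D (∏ j, g j ^ k j) :=
        dvd_trans (Finset.dvd_prod_of_mem (fun j => g j ^ k j) (Finset.mem_univ i)) h
      rw [hprod] at h1
      have h2 : (g i ^ k i) ∣ ∑ j ∈ Finset.univ.erase i,
          (∏ j' ∈ Finset.univ.erase j, g j' ^ k j') * D (g j ^ k j) := by
        apply Finset.dvd_sum
        intro j hj
        exact dvd_mul_of_dvd_left
          (Finset.dvd_prod_of_mem _ (Finset.mem_erase.mpr
            ⟨Ne.symm (Finset.ne_of_mem_erase hj), Finset.mem_univ i⟩)) _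
      have := dvd_sub h1 h2
      rwa [← Finset.add_sum_erase _ _ (Finset.mem_univ i), add_sub_cancel_right] at this
    rw [hpow i] at hterm
    have hne : g i ^ (k i - 1) ≠ 0 := pow_ne_zero _ (hp i).ne_zero
    have hterm' : g i ^ (k i - 1) * g i ∣
        g i ^ (k i - 1) * ((k i : R) * ((∏ j ∈ Finset.univ.erase i, g j ^ k j) * D (g i))) := by
      calc g i ^ (k i - 1) * g i = g i ^ k i := by
            rw [← pow_succ]; congr 1; have := hk i; omega
        _ ∣ _ := by
            refine hterm.trans (dvd_of_eq ?_); ring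
    have := (mul_dvd_mul_iff_left hne).mp hterm'
    rcases (hp i).dvd_mul.mp this with h' | h'
    · exact absurd (isUnit_of_dvd_unit h' (hkunit i)) (hp i).not_unit
    · rcases (hp i).dvd_mul.mp h' with h'' | h''
      · exact absurd h'' (hPi i)
      · exact h''
  · intro h
    rw [hprod]
    apply Finset.dvd_sum
    intro i _
    rw [hpow i]
    have h1 : (∏ j, g j ^ k j) ∣
        (∏ j ∈ Finset.univ.erase i, g j ^ k j) * (g i ^ (k i - 1) * D (g i)) := by
      rw [← Finset.prod_erase_mul _ _ (Finset.mem_univ i)]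
      apply mul_dvd_mul_left
      calc g i ^ k i = g i ^ (k i - 1) * g i := by
            rw [← pow_succ]; congr 1; have := hk i; omega
        _ ∣ _ := mul_dvd_mul_left _ (h i)
    exact h1.trans ⟨(k i : R), by ring⟩

/-- For a UFD `R` that is a `ℂ`-algebra and `g = u * ∏ i, g i ^ k i` with `u` a unit and the
`g i` pairwise non-associated irreducible elements, a derivation `D` is logarithmic along `g`
if and only if it is logarithmic along the reduction `∏ i, g i`. -/
theorem derivation_log_eq_log_reduction
    {R : Type*} [CommRing R] [IsDomain R] [UniqueFactorizationMonoid R] [Algebra ℂ R]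
    {ℓ : ℕ} (g : Fin ℓ → R) (k : Fin ℓ → ℕ)
    (hirr : ∀ i, Irreducible (g i))
    (hassoc : ∀ i j, i ≠ j → ¬ Associated (g i) (g j))
    (hk : ∀ i, 1 ≤ k i)
    (u : Rˣ) (G : R) (hG : G = (u : R) * ∏ i, g i ^ k i)
    (D : Derivation ℂ R R) :
    D G ∈ Ideal.span {G} ↔ D (∏ i, g i) ∈ Ideal.span {∏ i, g i} := by
  have hp : ∀ i, Prime (g i) := fun i =>
    UniqueFactorizationMonoid.irreducible_iff_prime.mp (hirr i)
  rw [Ideal.mem_span_singleton, Ideal.mem_span_singleton]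
  have h2 := key_log g (fun _ => 1) hp hassoc (fun _ => le_refl 1) D
  simp only [pow_one] at h2
  rw [h2, ← key_log g k hp hassoc hk D]
  subst hG
  rw [Derivation.leibniz]
  simp only [smul_eq_mul]
  rw [Units.mul_left_dvd, dvd_add_left (dvd_mul_right _ _), Units.dvd_mul_left]
end

section
/- Let R = MvPolynomial (Fin n) ℂ be the polynomial ring in n variables over ℂ, and let h₁, h₂ ∈ R be nonzero polynomials whose zero loci in ℂⁿ coincide as sets, i.e., for every point x ∈ ℂⁿ one has h₁(x) = 0 if and only if h₂(x) = 0. Then Der(−log h₁) = Der(−log h₂): for every derivation D ∈ Derivation ℂ R R, D h₁ ∈ Ideal.span {h₁} if and only if D h₂ ∈ Ideal.span {h₂}. -/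
open MvPolynomial

variable {n : ℕ}

private abbrev R (n : ℕ) := MvPolynomial (Fin n) ℂ

set_option maxHeartbeats 2000000 in
/-- Saito, forward direction: if `f ∣ D f` and `p` is a prime factor of `f`, then `p ∣ D p`. -/
private lemma log_prime_of_log {f p : R n} (hf : f ≠ 0) (hp : Prime p) (hpf : p ∣ f)
    (D : Derivation ℂ (R n) (R n)) (hD : f ∣ D f) : p ∣ D p := by
  obtain ⟨m, g, hg, rfl⟩ := WfDvdMonoid.max_power_factor hf hp.irreducible
  have hm : m ≠ 0 := by
    rintro rfl
    simp only [pow_zero, one_mul] at hpf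
    exact hg hpf
  have hDf : D (p ^ m * g) = (m : R n) * p ^ (m - 1) * D p * g + p ^ m * D g := by
    rw [Derivation.leibniz, Derivation.leibniz_pow]
    simp only [smul_eq_mul, nsmul_eq_mul]
    ring
  have h1 : p ^ m ∣ (m : R n) * p ^ (m - 1) * D p * g := by
    have h2 : p ^ m ∣ D (p ^ m * g) := dvd_trans (dvd_mul_right _ _) hD
    rw [hDf] at h2
    exact (dvd_add_right (dvd_mul_right _ _)).mp (by rwa [add_comm] at h2)
  have hpm : p ^ m = p ^ (m - 1) * p := by
    rw [← pow_succ, Nat.sub_add_cancel (Nat.one_le_iff_ne_zero.mpr hm)]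
  rw [hpm] at h1
  have h3 : p ∣ (m : R n) * (D p * g) := by
    have hpne : p ^ (m - 1) ≠ 0 := pow_ne_zero _ hp.ne_zero
    have : p ^ (m - 1) * ((m : R n) * (D p * g)) = (m : R n) * p ^ (m - 1) * D p * g := by ring
    rw [← this] at h1
    exact (mul_dvd_mul_iff_left hpne).mp h1
  have hmu : IsUnit ((m : R n)) := by
    have : ((m : R n)) = MvPolynomial.C ((m : ℂ)) := by
      simp [map_natCast]
    rw [this]
    exact (MvPolynomial.C : ℂ →+* R n).isUnit_map (isUnit_iff_ne_zero.mpr (by exact_mod_cast hm))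
  rcases hp.dvd_mul.mp (hmu.dvd_mul_left.mp (by rwa [mul_comm] at h3)) with h4 | h4
  · exact h4
  · exact (hg h4).elim

/-- Saito, converse: if every prime factor `p` of `f` satisfies `p ∣ D p`, then `f ∣ D f`. -/
private lemma log_of_log_primes {f : R n}
    (D : Derivation ℂ (R n) (R n)) (hD : ∀ p : R n, Prime p → p ∣ f → p ∣ D p) : f ∣ D f := by
  induction f using UniqueFactorizationMonoid.induction_on_prime with
  | h₁ => simp
  | h₂ x hx => exact hx.dvd
  | h₃ a p ha hp ih =>
    have hDa : a ∣ D a := ih fun q hq hqa => hD q hq (hqa.mul_left p)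
    have hDp : p ∣ D p := hD p hp (dvd_mul_right _ _)
    rw [Derivation.leibniz, smul_eq_mul, smul_eq_mul]
    refine dvd_add (mul_dvd_mul_left p hDa) ?_
    rw [mul_comm p a]
    exact mul_dvd_mul_left a hDp


private lemma zeroLocus_span_singleton (h : R n) :
    MvPolynomial.zeroLocus ℂ (Ideal.span {h}) = {x | MvPolynomial.eval x h = 0} := by
  ext x
  rw [MvPolynomial.mem_zeroLocus_iff]
  constructor
  · intro hx
    exact hx h (Ideal.mem_span_singleton_self h)
  · intro hx p hp
    obtain ⟨c, rfl⟩ := Ideal.mem_span_singleton.mp hp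
    simp [Set.mem_setOf_eq.mp hx]

/-- If two nonzero polynomials `h₁, h₂ ∈ ℂ[x₁,…,xₙ]` have the same zero locus in `ℂⁿ`, then
they have the same module of logarithmic derivations: `Der(-log h₁) = Der(-log h₂)`. -/
theorem derivation_log_eq_of_eq_zeroLocus
    {n : ℕ} (h₁ h₂ : MvPolynomial (Fin n) ℂ)
    (h₁0 : h₁ ≠ 0) (h₂0 : h₂ ≠ 0)
    (hloc : ∀ x : Fin n → ℂ, MvPolynomial.eval x h₁ = 0 ↔ MvPolynomial.eval x h₂ = 0)
    (D : Derivation ℂ (MvPolynomial (Fin n) ℂ) (MvPolynomial (Fin n) ℂ)) :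
    D h₁ ∈ Ideal.span {h₁} ↔ D h₂ ∈ Ideal.span {h₂} := by
  have hrad : (Ideal.span {h₁}).radical = (Ideal.span {h₂}).radical := by
    rw [← MvPolynomial.vanishingIdeal_zeroLocus_eq_radical (K := ℂ),
      ← MvPolynomial.vanishingIdeal_zeroLocus_eq_radical (K := ℂ),
      zeroLocus_span_singleton, zeroLocus_span_singleton]
    congr 1
    ext x
    exact hloc x
  -- same prime divisors
  have key : ∀ f g : R n, (Ideal.span {f}).radical = (Ideal.span {g}).radical →
      ∀ p : R n, Prime p → p ∣ f → p ∣ g := by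
    intro f g hfg p hp hpf
    have hprime : (Ideal.span {p}).IsPrime :=
      (Ideal.span_singleton_prime hp.ne_zero).mpr hp
    have h1 : Ideal.span {f} ≤ Ideal.span {p} :=
      Ideal.span_singleton_le_span_singleton.mpr hpf
    have h2 : (Ideal.span {f}).radical ≤ Ideal.span {p} :=
      hprime.radical_le_iff.mpr h1
    rw [hfg] at h2
    have : g ∈ Ideal.span {p} :=
      h2 (Ideal.le_radical (Ideal.mem_span_singleton_self g))
    exact Ideal.mem_span_singleton.mp this
  rw [Ideal.mem_span_singleton, Ideal.mem_span_singleton]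
  constructor
  · intro hD
    exact log_of_log_primes D fun p hp hpg =>
      log_prime_of_log h₁0 hp (key h₂ h₁ hrad.symm p hp hpg) D hD
  · intro hD
    exact log_of_log_primes D fun p hp hpg =>
      log_prime_of_log h₂0 hp (key h₁ h₂ hrad p hp hpg) D hD
end

section
/- Let R be the multivariable polynomial ring over ℂ in the variables x_{ij}, 1 ≤ i ≤ n, 1 ≤ j ≤ n+1, let X be the generic n×(n+1) matrix with (i,j) entry x_{ij}, and for 1 ≤ k ≤ n+1 let Δ_k = (−1)^k times the determinant of the n×n matrix obtained from X by deleting column k. Then for all indices p ≠ q in {1, …, n+1} and every k ∈ {1, …, n+1}, the polynomial identity ∑_{i=1}^{n} x_{iq} · ∂Δ_k/∂x_{ip} = −δ_{kq} Δ_p holds in R, where δ_{kq} is 1 if k = q and 0 otherwise. -/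
open MvPolynomial

section Aux

open Matrix Finset

variable {σ : Type*} {ι : Type*} [DecidableEq ι]

lemma pderiv_finset_prod (v : σ) (s : Finset ι) (f : ι → MvPolynomial σ ℂ) :
    pderiv v (∏ i ∈ s, f i) = ∑ j ∈ s, pderiv v (f j) * ∏ i ∈ s.erase j, f i := by
  induction s using Finset.induction_on with
  | empty => simp
  | @insert a s ha ih =>
    rw [Finset.prod_insert ha, pderiv_mul, ih, Finset.sum_insert ha, Finset.erase_insert ha,
      Finset.mul_sum]
    congr 1
    refine Finset.sum_congr rfl fun j hj => ?_
    have hja : a ≠ j := fun h => ha (h ▸ hj)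
    rw [Finset.erase_insert_of_ne hja,
      Finset.prod_insert (fun h => ha (Finset.mem_of_mem_erase h))]
    ring

lemma pderiv_det {m : ℕ} (v : σ) (M : Matrix (Fin m) (Fin m) (MvPolynomial σ ℂ)) :
    pderiv v M.det = ∑ j, (M.updateCol j (fun r => pderiv v (M r j))).det := by
  have key : ∀ (σ' : Equiv.Perm (Fin m)) (j : Fin m),
      ∏ i, (M.updateCol j (fun r => pderiv v (M r j))) (σ' i) i
        = pderiv v (M (σ' j) j) * ∏ i ∈ Finset.univ.erase j, M (σ' i) i := by
    intro σ' j
    rw [← Finset.mul_prod_erase Finset.univ _ (Finset.mem_univ j), Matrix.updateCol_self]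
    congr 1
    refine Finset.prod_congr rfl fun i hi => ?_
    rw [Matrix.updateCol_ne (Finset.ne_of_mem_erase hi)]
  have hC : ∀ (σ' : Equiv.Perm (Fin m)),
      ((Equiv.Perm.sign σ' : ℤ) : MvPolynomial σ ℂ)
        = C ((Equiv.Perm.sign σ' : ℤ) : ℂ) := by
    intro σ'
    rw [map_intCast (C : ℂ →+* MvPolynomial σ ℂ)]
  rw [det_apply', map_sum]
  simp only [hC, pderiv_C_mul, pderiv_finset_prod, Finset.mul_sum]
  rw [Finset.sum_comm]
  refine Finset.sum_congr rfl fun j _ => ?_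
  rw [det_apply']
  refine Finset.sum_congr rfl fun σ' _ => ?_
  rw [key, hC]

lemma det_updateColumn_finset_sum {m : ℕ} (A : Matrix (Fin m) (Fin m) (MvPolynomial σ ℂ))
    (j : Fin m) (s : Finset ι) (g : ι → Fin m → MvPolynomial σ ℂ) :
    (A.updateCol j (fun r => ∑ i ∈ s, g i r)).det
      = ∑ i ∈ s, (A.updateCol j (g i)).det := by
  induction s using Finset.induction_on with
  | empty =>
    simp only [Finset.sum_empty]
    exact det_eq_zero_of_column_eq_zero j (fun i => by simp)
  | @insert a s ha ih =>
    simp only [Finset.sum_insert ha]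
    rw [← ih]
    rw [show (fun r => g a r + ∑ i ∈ s, g i r) = g a + (fun r => ∑ i ∈ s, g i r) from rfl,
      det_updateCol_add]


end Aux

/-- The generic `n × (n+1)` matrix over `ℂ`, whose `(i,j)` entry is the variable `x_{ij}`. -/
noncomputable def genericMatrix (n : ℕ) :
    Matrix (Fin n) (Fin (n + 1)) (MvPolynomial (Fin n × Fin (n + 1)) ℂ) :=
  fun i j => MvPolynomial.X (i, j)

/-- `Δ_k = (-1)^k` times the determinant of the generic `n × (n+1)` matrix with column `k`
deleted (with `k` counted starting from `1`, i.e. the sign is `(-1)^(k+1)` for `k : Fin (n+1)`). -/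
noncomputable def genericSignedMinor (n : ℕ) (k : Fin (n + 1)) :
    MvPolynomial (Fin n × Fin (n + 1)) ℂ :=
  (-1) ^ ((k : ℕ) + 1) * ((genericMatrix n).submatrix id k.succAbove).det


section Aux2
open Matrix Finset

noncomputable def borderMatrix (n : ℕ) (k : Fin (n + 1)) :
    Matrix (Fin (n + 1)) (Fin (n + 1)) (MvPolynomial (Fin n × Fin (n + 1)) ℂ) :=
  Matrix.of (Fin.cons (fun j => if j = k then 1 else 0) (fun i j => MvPolynomial.X (i, j)))

lemma borderMatrix_zero {n : ℕ} (k j : Fin (n + 1)) :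
    borderMatrix n k 0 j = if j = k then 1 else 0 := rfl

lemma borderMatrix_succ {n : ℕ} (k : Fin (n + 1)) (i : Fin n) (j : Fin (n + 1)) :
    borderMatrix n k i.succ j = MvPolynomial.X (i, j) := by
  simp [borderMatrix]

lemma borderMatrix_submatrix {n : ℕ} (k j : Fin (n + 1)) :
    (borderMatrix n k).submatrix Fin.succ j.succAbove
      = (genericMatrix n).submatrix id j.succAbove := by
  ext a b
  simp [borderMatrix_succ, genericMatrix]

lemma det_borderMatrix {n : ℕ} (k : Fin (n + 1)) :
    (borderMatrix n k).det = -genericSignedMinor n k := by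
  rw [det_succ_row_zero]
  rw [Finset.sum_eq_single k]
  · rw [borderMatrix_zero, if_pos rfl, borderMatrix_submatrix, genericSignedMinor, pow_succ]
    ring
  · intro j _ hj
    rw [borderMatrix_zero, if_neg hj]
    ring
  · intro h
    exact absurd (Finset.mem_univ k) h


end Aux2

/-- For `p ≠ q` and any `k`, the identity
`∑ i, x_{iq} ∂Δ_k/∂x_{ip} = -δ_{kq} Δ_p` holds among the signed maximal minors of the
generic `n × (n+1)` matrix. -/
theorem sum_X_mul_pderiv_genericSignedMinor (n : ℕ) (p q : Fin (n + 1)) (hpq : p ≠ q)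
    (k : Fin (n + 1)) :
    ∑ i : Fin n, (genericMatrix n) i q * MvPolynomial.pderiv (i, p) (genericSignedMinor n k) =
      if k = q then -genericSignedMinor n p else 0 := by
  classical
  set B := borderMatrix n k with hBdef
  have hgsm : genericSignedMinor n k = -B.det := by rw [hBdef, det_borderMatrix]; ring
  have hB0 : ∀ j, B 0 j = if j = k then 1 else 0 := fun j => rfl
  have hBs : ∀ (i : Fin n) (j : Fin (n + 1)), B i.succ j = MvPolynomial.X (i, j) :=
    fun i j => borderMatrix_succ k i j
  set e0 : Fin (n + 1) → MvPolynomial (Fin n × Fin (n + 1)) ℂ :=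
    fun r => if r = 0 then 1 else 0 with he0def
  have he0z : e0 0 = 1 := if_pos rfl
  have he0s : ∀ a : Fin n, e0 a.succ = 0 := fun a => if_neg (Fin.succ_ne_zero a)
  set c : MvPolynomial (Fin n × Fin (n + 1)) ℂ := if k = q then 1 else 0 with hcdef
  -- derivative of det B
  have hderiv : ∀ i : Fin n, pderiv (i, p) B.det
      = (B.updateCol p (fun r => pderiv (i, p) (B r p))).det := by
    intro i
    rw [pderiv_det]
    refine Finset.sum_eq_single p ?_ (fun h => absurd (Finset.mem_univ p) h)
    intro j _ hj
    apply Matrix.det_eq_zero_of_column_eq_zero j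
    intro r
    rw [Matrix.updateCol_self]
    refine Fin.cases ?_ ?_ r
    · rw [hB0]
      split <;> simp
    · intro a
      rw [hBs]
      exact pderiv_X_of_ne (by simp [hj])
  -- the summed column
  have hu : ∀ r : Fin (n + 1),
      (∑ i : Fin n, (genericMatrix n) i q * pderiv (i, p) (B r p)) + c * e0 r = B r q := by
    intro r
    refine Fin.cases ?_ ?_ r
    · have hz : ∀ i : Fin n, pderiv (i, p) (B 0 p) = 0 := by
        intro i
        rw [hB0]
        split <;> simp
      have hsum : ∑ i : Fin n, genericMatrix n i q * pderiv (i, p) (B 0 p) = 0 := by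
        simp only [hz, mul_zero, Finset.sum_const_zero]
      rw [hsum, zero_add, he0z, mul_one, hB0, hcdef]
      by_cases h : q = k
      · simp [h]
      · simp [h, Ne.symm h]
    · intro a
      simp only [he0s, mul_zero, add_zero, hBs]
      have : ∀ i : Fin n, pderiv (i, p) (MvPolynomial.X (a, p) :
          MvPolynomial (Fin n × Fin (n + 1)) ℂ) = if a = i then 1 else 0 := by
        intro i
        rw [pderiv_X]
        simp [Pi.single_apply, Prod.ext_iff]
      simp only [this, mul_ite, mul_one, mul_zero, Finset.sum_ite_eq, Finset.mem_univ, if_pos]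
      rfl
  -- determinant with column p replaced by the e0 column
  have he0 : (B.updateCol p e0).det = -genericSignedMinor n p := by
    rw [Matrix.det_succ_column _ p]
    rw [Finset.sum_eq_single 0]
    · have h00 : (B.updateCol p e0) 0 p = 1 := by rw [Matrix.updateCol_self, he0z]
      have hsub : (B.updateCol p e0).submatrix (0 : Fin (n + 1)).succAbove p.succAbove
          = (genericMatrix n).submatrix id p.succAbove := by
        ext a b
        rw [Matrix.submatrix_apply, Fin.succAbove_zero,
          Matrix.updateCol_ne (Fin.succAbove_ne p b), hBs]
        rfl
      rw [h00, hsub, genericSignedMinor, pow_succ]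
      simp only [Fin.val_zero, pow_zero, zero_add]
      ring
    · intro r _ hr
      have h0r : (B.updateCol p e0) r p = 0 := by
        rw [Matrix.updateCol_self, he0def]
        exact if_neg hr
      rw [h0r]
      ring
    · intro h
      exact absurd (Finset.mem_univ 0) h
  -- duplicate column
  have hdup : (B.updateCol p (fun r => B r q)).det = 0 :=
    Matrix.det_updateCol_eq_zero (Ne.symm hpq)
  -- linear combination
  have hlin : ∑ i : Fin n, (genericMatrix n) i q *
        (B.updateCol p (fun r => pderiv (i, p) (B r p))).det
      = (B.updateCol p
          (fun r => ∑ i : Fin n, (genericMatrix n) i q * pderiv (i, p) (B r p))).det := by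
    rw [det_updateColumn_finset_sum]
    refine Finset.sum_congr rfl fun i _ => ?_
    rw [← Matrix.det_updateCol_smul]
    rfl
  have hsplit : (B.updateCol p
        (fun r => ∑ i : Fin n, (genericMatrix n) i q * pderiv (i, p) (B r p))).det
      = -(c * (B.updateCol p e0).det) := by
    have hfun : (fun r => B r q)
        = (fun r => ∑ i : Fin n, (genericMatrix n) i q * pderiv (i, p) (B r p)) + c • e0 := by
      funext r
      rw [← hu r]
      simp [mul_comm]
    have h2 := Matrix.det_updateCol_add B p
      (fun r => ∑ i : Fin n, (genericMatrix n) i q * pderiv (i, p) (B r p)) (c • e0)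
    rw [← hfun, hdup] at h2
    have h3 : (B.updateCol p (c • e0)).det = c * (B.updateCol p e0).det :=
      Matrix.det_updateCol_smul B p c e0
    linear_combination -h2 - h3
  calc ∑ i : Fin n, (genericMatrix n) i q * pderiv (i, p) (genericSignedMinor n k)
      = -∑ i : Fin n, (genericMatrix n) i q *
          (B.updateCol p (fun r => pderiv (i, p) (B r p))).det := by
        rw [← Finset.sum_neg_distrib]
        refine Finset.sum_congr rfl fun i _ => ?_
        rw [hgsm, map_neg, ← hderiv i]
        ring
    _ = -(c * genericSignedMinor n p) := by
        rw [hlin, hsplit, he0]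
        ring
    _ = if k = q then -genericSignedMinor n p else 0 := by
        rw [hcdef]
        split <;> ring
end

section
/- Let R be the multivariable polynomial ring over ℂ in the variables x_{ij}, 1 ≤ i ≤ n, 1 ≤ j ≤ n+1, let X be the generic n×(n+1) matrix with (i,j) entry x_{ij}, and for 1 ≤ k ≤ n+1 let Δ_k = (−1)^k times the determinant of the n×n matrix obtained from X by deleting column k. Then for every r ∈ {1, …, n} and all q, k ∈ {1, …, n+1}, the polynomial identity ∑_{j=1}^{n+1} x_{rj} · ∂Δ_k/∂x_{rj} − ∑_{i=1}^{n} x_{iq} · ∂Δ_k/∂x_{iq} = δ_{kq} Δ_q holds in R, where δ_{kq} is 1 if k = q and 0 otherwise. -/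
open MvPolynomial
open Finset

lemma pderiv_prod_X {σ : Type*} [DecidableEq σ] {ι : Type*} [DecidableEq ι]
    (s : Finset ι) (g : ι → σ) (v : σ) :
    pderiv v (∏ i ∈ s, (X (g i) : MvPolynomial σ ℂ)) =
      ∑ i ∈ s, if g i = v then ∏ j ∈ s.erase i, (X (g j) : MvPolynomial σ ℂ) else 0 := by
  induction s using Finset.induction_on with
  | empty => simp
  | @insert a s ha ih =>
    rw [Finset.prod_insert ha, Derivation.leibniz, ih, Finset.sum_insert ha,
      Finset.erase_insert ha, smul_eq_mul, smul_eq_mul, Finset.mul_sum, pderiv_X]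
    rw [add_comm]
    congr 1
    · split <;> simp_all [Pi.single_apply]
    · refine Finset.sum_congr rfl fun i hi => ?_
      rw [Finset.erase_insert_of_ne (by rintro rfl; exact ha hi),
        Finset.prod_insert (by simp [ha, Finset.mem_erase])]
      split <;> simp


lemma genDet_eq (n : ℕ) (k : Fin (n+1)) :
    ((genericMatrix n).submatrix id k.succAbove).det =
      ∑ σ : Equiv.Perm (Fin n), (Equiv.Perm.sign σ : ℤ) •
        ∏ i : Fin n, (X (σ i, k.succAbove i) : MvPolynomial (Fin n × Fin (n+1)) ℂ) := by
  rw [Matrix.det_apply]; rfl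

lemma pderiv_genDet (n : ℕ) (k : Fin (n+1)) (v : Fin n × Fin (n+1)) :
    pderiv v ((genericMatrix n).submatrix id k.succAbove).det =
      ∑ σ : Equiv.Perm (Fin n), (Equiv.Perm.sign σ : ℤ) •
        ∑ i : Fin n, if ((σ i, k.succAbove i) : Fin n × Fin (n+1)) = v then
          ∏ j ∈ Finset.univ.erase i, (X (σ j, k.succAbove j) : MvPolynomial (Fin n × Fin (n+1)) ℂ)
        else 0 := by
  rw [genDet_eq, map_sum]
  refine Finset.sum_congr rfl fun σ _ => ?_
  rw [map_zsmul]
  exact congrArg _ (pderiv_prod_X Finset.univ (fun i => (σ i, k.succAbove i)) v)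

lemma pderiv_genDet_col_self (n : ℕ) (k : Fin (n+1)) (i : Fin n) :
    pderiv (i, k) ((genericMatrix n).submatrix id k.succAbove).det = 0 := by
  rw [pderiv_genDet]
  simp [Prod.ext_iff, Fin.succAbove_ne]

lemma row_sum (n : ℕ) (r : Fin n) (k : Fin (n+1)) :
    ∑ j : Fin (n+1), (X (r, j) : MvPolynomial (Fin n × Fin (n+1)) ℂ) *
        pderiv (r, j) ((genericMatrix n).submatrix id k.succAbove).det =
      ((genericMatrix n).submatrix id k.succAbove).det := by
  simp only [pderiv_genDet, Finset.mul_sum]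
  rw [Finset.sum_comm, genDet_eq]
  refine Finset.sum_congr rfl fun σ _ => ?_
  simp only [mul_smul_comm, ← Finset.smul_sum]
  congr 1
  simp only [Finset.mul_sum, mul_ite, mul_zero, Prod.mk.injEq, ite_and]
  rw [Finset.sum_comm]
  have h1 : ∀ i : Fin n, (∑ x : Fin (n+1), if σ i = r then if k.succAbove i = x then
      X (r, x) * ∏ j ∈ Finset.univ.erase i,
        (X (σ j, k.succAbove j) : MvPolynomial (Fin n × Fin (n+1)) ℂ) else 0 else 0) =
      if i = σ⁻¹ r then X (σ i, k.succAbove i) * ∏ j ∈ Finset.univ.erase i,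
        X (σ j, k.succAbove j) else 0 := by
    intro i
    by_cases hσ : σ i = r
    · subst hσ
      simp [Finset.sum_ite_eq]
    · have : ¬ (i = σ⁻¹ r) := by rw [Equiv.Perm.eq_inv_iff_eq]; exact hσ
      simp [hσ, this]
      intro h; exact absurd h this
  rw [Finset.sum_congr rfl (fun i _ => h1 i), Finset.sum_ite_eq' Finset.univ (σ⁻¹ r)]
  rw [if_pos (Finset.mem_univ _)]
  exact Finset.mul_prod_erase Finset.univ (fun j => X (σ j, k.succAbove j)) (Finset.mem_univ (σ⁻¹ r))

lemma col_sum (n : ℕ) (q k : Fin (n+1)) (hq : q ≠ k) :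
    ∑ i : Fin n, (X (i, q) : MvPolynomial (Fin n × Fin (n+1)) ℂ) *
        pderiv (i, q) ((genericMatrix n).submatrix id k.succAbove).det =
      ((genericMatrix n).submatrix id k.succAbove).det := by
  obtain ⟨j₀, hj₀⟩ := Fin.exists_succAbove_eq hq
  subst hj₀
  simp only [pderiv_genDet, Finset.mul_sum]
  rw [Finset.sum_comm, genDet_eq]
  refine Finset.sum_congr rfl fun σ _ => ?_
  simp only [mul_smul_comm, ← Finset.smul_sum]
  congr 1
  simp only [Finset.mul_sum, mul_ite, mul_zero, Prod.mk.injEq, ite_and]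
  rw [Finset.sum_comm]
  simp only [Finset.sum_ite_eq, Finset.mem_univ, if_true, Fin.succAbove_right_inj]
  rw [Finset.sum_ite_eq' Finset.univ j₀]
  rw [if_pos (Finset.mem_univ _)]
  exact Finset.mul_prod_erase Finset.univ (fun j => X (σ j, k.succAbove j)) (Finset.mem_univ j₀)

lemma genericMatrix_apply (n : ℕ) (i : Fin n) (j : Fin (n+1)) :
    genericMatrix n i j = X (i, j) := rfl

/-- For any row `r` and any columns `q, k`, the identity
`∑ j, x_{rj} ∂Δ_k/∂x_{rj} - ∑ i, x_{iq} ∂Δ_k/∂x_{iq} = δ_{kq} Δ_q` holds among the signed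
maximal minors of the generic `n × (n+1)` matrix. -/
theorem sum_X_mul_pderiv_genericSignedMinor_diag (n : ℕ) (r : Fin n) (q k : Fin (n + 1)) :
    (∑ j : Fin (n + 1),
        (genericMatrix n) r j * MvPolynomial.pderiv (r, j) (genericSignedMinor n k)) -
      ∑ i : Fin n, (genericMatrix n) i q * MvPolynomial.pderiv (i, q) (genericSignedMinor n k) =
      if k = q then genericSignedMinor n q else 0 := by
  have hc : ((-1 : MvPolynomial (Fin n × Fin (n+1)) ℂ)) ^ ((k:ℕ)+1)
      = C ((-1:ℂ) ^ ((k:ℕ)+1)) := by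
    rw [map_pow, map_neg, map_one]
  have h2 : ∀ v : Fin n × Fin (n+1), pderiv v (genericSignedMinor n k) =
      C ((-1:ℂ) ^ ((k:ℕ)+1)) * pderiv v ((genericMatrix n).submatrix id k.succAbove).det := by
    intro v; rw [genericSignedMinor, hc, pderiv_C_mul]
  simp only [genericMatrix_apply, h2]
  have e1 : ∑ j : Fin (n+1), (X (r, j) : MvPolynomial (Fin n × Fin (n+1)) ℂ) *
      (C ((-1:ℂ) ^ ((k:ℕ)+1)) * pderiv (r, j) ((genericMatrix n).submatrix id k.succAbove).det) =
      C ((-1:ℂ) ^ ((k:ℕ)+1)) * ∑ j : Fin (n+1), X (r, j) *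
        pderiv (r, j) ((genericMatrix n).submatrix id k.succAbove).det := by
    rw [Finset.mul_sum]; exact Finset.sum_congr rfl fun j _ => mul_left_comm _ _ _
  have e2 : ∑ i : Fin n, (X (i, q) : MvPolynomial (Fin n × Fin (n+1)) ℂ) *
      (C ((-1:ℂ) ^ ((k:ℕ)+1)) * pderiv (i, q) ((genericMatrix n).submatrix id k.succAbove).det) =
      C ((-1:ℂ) ^ ((k:ℕ)+1)) * ∑ i : Fin n, X (i, q) *
        pderiv (i, q) ((genericMatrix n).submatrix id k.succAbove).det := by
    rw [Finset.mul_sum]; exact Finset.sum_congr rfl fun i _ => mul_left_comm _ _ _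
  rw [e1, e2, row_sum]
  by_cases h : k = q
  · subst h
    rw [if_pos rfl]
    simp only [pderiv_genDet_col_self, mul_zero, Finset.sum_const_zero, sub_zero]
    rw [genericSignedMinor, hc]
  · rw [if_neg h, col_sum n q k (fun hqk => h hqk.symm), sub_self]
end

section
/- Let R be a commutative ring, let Y be an n×(n+1) matrix over R, and let A be an (n+1)×(n+1) matrix over R. For any n×(n+1) matrix Z over R and 1 ≤ k ≤ n+1, write Δ_k(Z) = (−1)^k times the determinant of the n×n matrix obtained from Z by deleting column k. Then for every k ∈ {1, …, n+1}, Δ_k(Y · Aᵀ) = ∑_{j=1}^{n+1} Δ_j(Y) · (adj A)_{jk}, where adj A is the adjugate matrix of A. Equivalently, the row vector of signed maximal minors of Y·Aᵀ equals the row vector of signed maximal minors of Y multiplied on the right by the adjugate of A. -/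
open Matrix
/-- `Δ_k(Z) = (-1)^k` times the determinant of the `n × n` matrix obtained from the
`n × (n+1)` matrix `Z` by deleting column `k` (with `k` counted starting from `1`, i.e. the
sign is `(-1)^(k+1)` for `k : Fin (n+1)`). -/
def signedMinor {R : Type*} [CommRing R] {n : ℕ} (Z : Matrix (Fin n) (Fin (n + 1)) R)
    (k : Fin (n + 1)) : R :=
  (-1) ^ ((k : ℕ) + 1) * (Z.submatrix id k.succAbove).det

/-- Laplace expansion along the first row of a matrix built by stacking a row `v` on top of `Z`. -/
lemma det_cons_aux {R : Type*} [CommRing R] {n : ℕ} (v : Fin (n + 1) → R)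
    (Z : Matrix (Fin n) (Fin (n + 1)) R) :
    (Matrix.of (Fin.cons v Z) : Matrix (Fin (n + 1)) (Fin (n + 1)) R).det
      = ∑ j : Fin (n + 1), (-1) ^ (j : ℕ) * v j * (Z.submatrix id j.succAbove).det := by
  rw [Matrix.det_succ_row_zero]
  refine Finset.sum_congr rfl fun j _ => ?_
  have h : (Matrix.of (Fin.cons v Z)).submatrix Fin.succ j.succAbove
      = Z.submatrix id j.succAbove := by
    ext i l; simp; rfl
  rw [h]
  simp; rfl

/-- The key identity, multiplied by `det A` (valid over any commutative ring). -/
lemma det_mul_signedMinor_aux {R : Type*} [CommRing R] {n : ℕ}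
    (Y : Matrix (Fin n) (Fin (n + 1)) R) (A : Matrix (Fin (n + 1)) (Fin (n + 1)) R)
    (k : Fin (n + 1)) :
    A.det * signedMinor (Y * Aᵀ) k
      = A.det * ∑ j : Fin (n + 1), signedMinor Y j * A.adjugate j k := by
  set w : Fin (n + 1) → R := fun j => A.adjugate j k with hw
  have hMB : (Matrix.of (Fin.cons w Y) : Matrix (Fin (n + 1)) (Fin (n + 1)) R) * Aᵀ
      = Matrix.of (Fin.cons (fun i => A.det * (1 : Matrix (Fin (n+1)) (Fin (n+1)) R) i k)
          (Y * Aᵀ)) := by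
    ext i j
    refine Fin.cases ?_ (fun i => ?_) i
    · have : (A * A.adjugate) j k = A.det * (1 : Matrix (Fin (n+1)) (Fin (n+1)) R) j k := by
        rw [Matrix.mul_adjugate]; simp [Matrix.smul_apply]
      simp only [Matrix.mul_apply, Matrix.of_apply, Fin.cons_zero, Matrix.transpose_apply]
      show ∑ j_1, w j_1 * A j j_1 = A.det * (1 : Matrix (Fin (n+1)) (Fin (n+1)) R) j k
      rw [← this]
      simp [Matrix.mul_apply, hw, mul_comm]
    · show ∑ j_1, Y i j_1 * A j j_1 = (Y * Aᵀ) i j; simp [Matrix.mul_apply]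
  have hdet := congrArg Matrix.det hMB
  rw [Matrix.det_mul, Matrix.det_transpose, det_cons_aux, det_cons_aux] at hdet
  have hR : ∑ j : Fin (n + 1),
      (-1) ^ (j : ℕ) * (A.det * (1 : Matrix (Fin (n+1)) (Fin (n+1)) R) j k)
        * ((Y * Aᵀ).submatrix id j.succAbove).det
      = (-1) ^ (k : ℕ) * A.det * ((Y * Aᵀ).submatrix id k.succAbove).det := by
    rw [Finset.sum_eq_single k]
    · simp [Matrix.one_apply]
    · intro j _ hj
      simp [Matrix.one_apply, hj]
    · simp
  rw [hR] at hdet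
  simp only [signedMinor, Finset.mul_sum]
  have : ∀ j : Fin (n+1),
      A.det * ((-1) ^ ((j : ℕ) + 1) * (Y.submatrix id j.succAbove).det * A.adjugate j k)
      = -(((-1) ^ (j : ℕ) * w j * (Y.submatrix id j.succAbove).det) * A.det) := by
    intro j; rw [hw]; ring
  rw [Finset.sum_congr rfl fun j _ => this j, Finset.sum_neg_distrib, ← Finset.sum_mul, hdet]
  ring

/-- `signedMinor` commutes with ring homomorphisms. -/
lemma map_signedMinor {R S : Type*} [CommRing R] [CommRing S] (φ : R →+* S) {n : ℕ}
    (Z : Matrix (Fin n) (Fin (n + 1)) R) (k : Fin (n + 1)) :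
    signedMinor (Z.map φ) k = φ (signedMinor Z k) := by
  have : (Z.map φ).submatrix id k.succAbove = ((Z.submatrix id k.succAbove).map φ) := by
    ext i j; simp
  rw [signedMinor, signedMinor, this, ← RingHom.mapMatrix_apply, ← RingHom.map_det]
  simp

/-- The row vector of signed maximal minors of `Y * Aᵀ` equals the row vector of signed maximal
minors of `Y` multiplied on the right by the adjugate of `A`:
`Δ_k(Y·Aᵀ) = ∑ j, Δ_j(Y) (adj A)_{jk}`. -/
theorem signedMinor_mul_transpose {R : Type*} [CommRing R] {n : ℕ}
    (Y : Matrix (Fin n) (Fin (n + 1)) R) (A : Matrix (Fin (n + 1)) (Fin (n + 1)) R)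
    (k : Fin (n + 1)) :
    signedMinor (Y * Aᵀ) k = ∑ j : Fin (n + 1), signedMinor Y j * A.adjugate j k := by
  classical
  -- Work generically over a polynomial ring where `det` of the generic matrix is a nonzerodivisor.
  set σ := (Fin n × Fin (n + 1)) ⊕ (Fin (n + 1) × Fin (n + 1))
  let S := MvPolynomial σ ℤ
  let Yg : Matrix (Fin n) (Fin (n + 1)) S := Matrix.of fun i j => MvPolynomial.X (Sum.inl (i, j))
  let B : Matrix (Fin (n + 1)) (Fin (n + 1)) S :=
    Matrix.of fun i j => MvPolynomial.X (Sum.inr (i, j))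
  have hB : B = (MvPolynomial.rename (Sum.inr : _ → σ)).toRingHom.mapMatrix
      (Matrix.mvPolynomialX (Fin (n + 1)) (Fin (n + 1)) ℤ) := by
    ext i j
    simp [B, Matrix.mvPolynomialX]
  have hdet : B.det ≠ 0 := by
    rw [hB, ← RingHom.map_det]
    simp only [AlgHom.toRingHom_eq_coe, RingHom.coe_coe]
    intro h
    exact Matrix.det_mvPolynomialX_ne_zero (m := Fin (n + 1)) (R := ℤ)
      ((MvPolynomial.rename_injective _ Sum.inr_injective).eq_iff.mp (by simpa using h))
  have key := det_mul_signedMinor_aux Yg B k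
  have hgen : signedMinor (Yg * Bᵀ) k = ∑ j : Fin (n + 1), signedMinor Yg j * B.adjugate j k :=
    mul_left_cancel₀ hdet key
  -- Specialize via evaluation.
  let φ : S →+* R := MvPolynomial.eval₂Hom (Int.castRingHom R)
    (Sum.elim (fun p => Y p.1 p.2) (fun p => A p.1 p.2))
  have hY : Yg.map φ = Y := by ext i j; exact MvPolynomial.eval₂Hom_X' _ _ _
  have hA : B.map φ = A := by ext i j; exact MvPolynomial.eval₂Hom_X' _ _ _
  have hmul : (Yg * Bᵀ).map φ = Y * Aᵀ := by
    rw [← hY, ← hA]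
    ext i j
    simp [Matrix.mul_apply, Matrix.map_apply]
  have hadj : ∀ j, φ (B.adjugate j k) = A.adjugate j k := by
    intro j
    have h := RingHom.map_adjugate φ B
    simp only [RingHom.mapMatrix_apply, hA] at h
    exact congrFun (congrFun h j) k
  have := congrArg φ hgen
  rw [← map_signedMinor φ, hmul, map_sum] at this
  rw [this]
  refine Finset.sum_congr rfl fun j _ => ?_
  rw [_root_.map_mul, ← map_signedMinor φ, hY, hadj]
end

section
/- Let m, n ≥ 1 and let B be an m×n complex matrix with rank B ≥ m−1. Then for every skew-symmetric m×m complex matrix C (Cᵀ = −C) there exist an n×m complex matrix D and a symmetric m×m complex matrix E (Eᵀ = E) such that C = B·D + E. -/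
open Matrix

private lemma exists_mul_eq_of_cols_mem {m n : ℕ}
    (B : Matrix (Fin m) (Fin n) ℂ) (X : Matrix (Fin m) (Fin m) ℂ)
    (h : ∀ j, (fun i => X i j) ∈ LinearMap.range B.mulVecLin) :
    ∃ D : Matrix (Fin n) (Fin m) ℂ, B * D = X := by
  have h' : ∀ j, ∃ d, B *ᵥ d = fun i => X i j := by
    intro j
    obtain ⟨d, hd⟩ := h j
    exact ⟨d, by simpa using hd⟩
  choose d hd using h'
  refine ⟨fun k j => d j k, ?_⟩
  ext i j
  have := congrFun (hd j) i
  show (∑ x, B i x * d j x) = X i j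
  simpa [Matrix.mul_apply, Matrix.mulVec, dotProduct] using this

/-- If `B` is an `m × n` complex matrix of rank at least `m - 1`, then every skew-symmetric
`m × m` matrix `C` can be written as `C = B·D + E` with `E` symmetric. -/
theorem skew_eq_mul_add_symm_of_rank_ge {m n : ℕ} (hm : 1 ≤ m) (hn : 1 ≤ n)
    (B : Matrix (Fin m) (Fin n) ℂ) (hB : m - 1 ≤ B.rank)
    (C : Matrix (Fin m) (Fin m) ℂ) (hC : Cᵀ = -C) :
    ∃ (D : Matrix (Fin n) (Fin m) ℂ) (E : Matrix (Fin m) (Fin m) ℂ),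
      Eᵀ = E ∧ C = B * D + E := by
  -- it suffices to find a symmetric S with all columns of C + S in the range of B
  suffices hS : ∃ S : Matrix (Fin m) (Fin m) ℂ, Sᵀ = S ∧
      ∀ j, (fun i => C i j + S i j) ∈ LinearMap.range B.mulVecLin by
    obtain ⟨S, hSsymm, hScol⟩ := hS
    obtain ⟨D, hD⟩ := exists_mul_eq_of_cols_mem B (C + S) (by simpa using hScol)
    refine ⟨D, -S, by simp [hSsymm], ?_⟩
    rw [hD]
    ext i j; simp
  by_cases htop : LinearMap.range B.mulVecLin = ⊤
  · exact ⟨0, by simp, fun j => by simp [htop]⟩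
  · -- rank B = m - 1
    have hrank_lt : B.rank < m := by
      have := Submodule.finrank_lt htop
      simpa [Matrix.rank] using this
    have hrank : B.rank = m - 1 := le_antisymm (by omega) hB
    -- find a nonzero left-kernel vector v
    have hker : ∃ v : Fin m → ℂ, v ≠ 0 ∧ v ᵥ* B = 0 := by
      have h1 : Bᵀ.rank + Module.finrank ℂ (LinearMap.ker Bᵀ.mulVecLin) = m := by
        have := LinearMap.finrank_range_add_finrank_ker Bᵀ.mulVecLin
        simpa [Matrix.rank] using this
      have h2 : Bᵀ.rank = m - 1 := by rw [Matrix.rank_transpose]; exact hrank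
      have h3 : Module.finrank ℂ (LinearMap.ker Bᵀ.mulVecLin) = 1 := by omega
      have h4 : LinearMap.ker Bᵀ.mulVecLin ≠ ⊥ := by
        intro hbot
        rw [hbot] at h3
        simp at h3
      obtain ⟨v, hv, hvne⟩ := Submodule.exists_mem_ne_zero_of_ne_bot h4
      refine ⟨v, hvne, ?_⟩
      simpa using hv
    obtain ⟨v, hvne, hvB⟩ := hker
    -- the linear functional x ↦ v ⬝ᵥ x
    set φ : (Fin m → ℂ) →ₗ[ℂ] ℂ :=
      { toFun := fun x => v ⬝ᵥ x
        map_add' := fun x y => dotProduct_add v x y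
        map_smul' := fun c x => by simp [dotProduct_smul] } with hφdef
    have hφapply : ∀ x, φ x = v ⬝ᵥ x := fun x => rfl
    have hφne : φ ≠ 0 := by
      obtain ⟨i, hi⟩ := Function.ne_iff.mp hvne
      intro h0
      have : φ (Pi.single i 1) = 0 := by rw [h0]; rfl
      rw [hφapply] at this
      simp [dotProduct_single] at this
      exact hi (by simpa using this)
    -- range B ≤ ker φ
    have hle : LinearMap.range B.mulVecLin ≤ LinearMap.ker φ := by
      rintro x ⟨d, rfl⟩
      simp only [LinearMap.mem_ker, hφapply, Matrix.mulVecLin_apply]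
      rw [dotProduct_mulVec, hvB, zero_dotProduct]
    -- ker φ has dimension m - 1, hence equals range B
    have hkerφ : Module.finrank ℂ (LinearMap.ker φ) = m - 1 := by
      have h1 : Module.finrank ℂ (LinearMap.range φ) +
          Module.finrank ℂ (LinearMap.ker φ) = m := by
        have := LinearMap.finrank_range_add_finrank_ker φ
        simpa using this
      have h2 : Module.finrank ℂ (LinearMap.range φ) = 1 := by
        have hle1 : Module.finrank ℂ (LinearMap.range φ) ≤ 1 := by
          have := Submodule.finrank_le (LinearMap.range φ)
          simpa using this
        have hne0 : Module.finrank ℂ (LinearMap.range φ) ≠ 0 := by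
          intro h0
          have : LinearMap.range φ = ⊥ := Submodule.finrank_eq_zero.mp h0
          exact hφne (LinearMap.range_eq_bot.mp this)
        omega
      omega
    have hrange : LinearMap.range B.mulVecLin = LinearMap.ker φ := by
      apply Submodule.eq_of_le_of_finrank_le hle
      rw [hkerφ]
      exact hB
    -- construct the symmetric correction S
    obtain ⟨i, hi⟩ := Function.ne_iff.mp hvne
    simp only [Pi.zero_apply] at hi
    set u : Fin m → ℂ := fun j => if j = i then (v i)⁻¹ else 0 with hu
    have hvu : (∑ a, v a * u a) = 1 := by
      simp only [hu, mul_ite, mul_zero]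
      rw [Finset.sum_ite_eq' Finset.univ i (fun a => v a * (v i)⁻¹)]
      simp
      field_simp
    set t : Fin m → ℂ := -(v ᵥ* C) with ht
    set c : ℂ := ∑ a, v a * t a with hc
    refine ⟨fun a b => t a * u b + u a * t b - c * (u a * u b), ?_, ?_⟩
    · ext a b
      change t b * u a + u b * t a - c * (u b * u a) = t a * u b + u a * t b - c * (u a * u b)
      ring
    · intro j
      rw [hrange, LinearMap.mem_ker, hφapply]
      show (∑ x, v x * (C x j + (t x * u j + u x * t j - c * (u x * u j)))) = 0
      have htj : t j = -∑ x, v x * C x j := by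
        rw [ht]
        simp [Matrix.vecMul, dotProduct]
      rw [show (∑ x, v x * (C x j + (t x * u j + u x * t j - c * (u x * u j))))
          = ∑ x, (v x * C x j + v x * t x * u j + v x * u x * t j
            - (c * u j) * (v x * u x)) from Finset.sum_congr rfl fun x _ => by ring]
      rw [Finset.sum_sub_distrib, Finset.sum_add_distrib, Finset.sum_add_distrib,
        ← Finset.sum_mul, ← Finset.sum_mul, ← Finset.mul_sum, hvu, ← hc, htj]
      ring
end

section
/- Let n be even, let Ω be the standard symplectic n×n matrix with block form [[0, I],[−I, 0]] (I the identity of size n/2), and let 1 ≤ m ≤ n+1. For an n×m complex matrix A, the ℂ-linear map from n×m complex matrices to skew-symmetric m×m complex matrices given by B ↦ AᵀΩB + BᵀΩA is surjective onto the space {C ∈ M_m(ℂ) : Cᵀ = −C} of skew-symmetric matrices if and only if rank A ≥ m−1. -/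
open Matrix

/-- The standard symplectic matrix `Ω = [[0, I], [-I, 0]]` of (even) size `2h`. -/
def stdSymplectic (h : ℕ) : Matrix (Fin h ⊕ Fin h) (Fin h ⊕ Fin h) ℂ :=
  Matrix.fromBlocks 0 1 (-1) 0

private lemma stdSymplectic_transpose (h : ℕ) : (stdSymplectic h)ᵀ = -stdSymplectic h := by
  simp [stdSymplectic, fromBlocks_transpose, fromBlocks_neg]

private lemma stdSymplectic_sq (h : ℕ) : stdSymplectic h * stdSymplectic h = -1 := by
  have : (-1 : Matrix (Fin h ⊕ Fin h) (Fin h ⊕ Fin h) ℂ) = fromBlocks (-1) 0 0 (-1) := by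
    rw [← fromBlocks_one, fromBlocks_neg]; norm_num
  rw [this]
  simp [stdSymplectic, fromBlocks_multiply]

private lemma dot_vecMulVec_mulVec {m : ℕ} (x a b y : Fin m → ℂ) :
    x ⬝ᵥ (vecMulVec a b *ᵥ y) = (x ⬝ᵥ a) * (b ⬝ᵥ y) := by
  simp [dotProduct, vecMulVec, mulVec, Finset.mul_sum, Finset.sum_mul]
  rw [Finset.sum_comm]
  apply Finset.sum_congr rfl
  intro j _
  apply Finset.sum_congr rfl
  intro i _
  ring

private lemma vecMul_vecMulVec' {m : ℕ} (f a b : Fin m → ℂ) :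
    f ᵥ* vecMulVec a b = (f ⬝ᵥ a) • b := by
  ext j
  simp [vecMul, vecMulVec, dotProduct, Finset.sum_mul]
  apply Finset.sum_congr rfl
  intro i _
  ring

private lemma vecMul_smul_mat {m : ℕ} (f : Fin m → ℂ) (c : ℂ) (M : Matrix (Fin m) (Fin m) ℂ) :
    f ᵥ* (c • M) = c • (f ᵥ* M) := by
  ext j
  simp [vecMul, dotProduct, Finset.mul_sum]
  apply Finset.sum_congr rfl
  intro i _
  ring

private lemma vecMulVec_transpose' {m : ℕ} (a b : Fin m → ℂ) :
    (vecMulVec a b)ᵀ = vecMulVec b a := by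
  ext i j
  simp [vecMulVec, transpose_apply, mul_comm]

/-- Core existence lemma: if `rank A ≥ m - 1` then every skew matrix is `AᵀX - XᵀA`. -/
private lemma exists_skew_decomp {ι : Type*} [Fintype ι] {m : ℕ} (hm : 1 ≤ m)
    (A : Matrix ι (Fin m) ℂ) (hrk : m - 1 ≤ A.rank)
    (C : Matrix (Fin m) (Fin m) ℂ) (hC : Cᵀ = -C) :
    ∃ X : Matrix ι (Fin m) ℂ, Aᵀ * X - Xᵀ * A = C := by
  obtain ⟨f, u, hfu, hker⟩ : ∃ f u : Fin m → ℂ,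
      (f = 0 ∨ f ⬝ᵥ u = 1) ∧
      ∀ x : Fin m → ℂ, f ⬝ᵥ x = 0 → x ∈ LinearMap.range (Aᵀ).mulVecLin := by
    by_cases htop : LinearMap.range (Aᵀ).mulVecLin = ⊤
    · exact ⟨0, 0, Or.inl rfl, fun x _ => htop ▸ Submodule.mem_top⟩
    · -- rank A = m - 1 < m in this case
      have hrT : Aᵀ.rank = A.rank := Matrix.rank_transpose A
      have hfrT : Module.finrank ℂ (LinearMap.range (Aᵀ).mulVecLin) = Aᵀ.rank := rfl
      have hlem : Aᵀ.rank ≤ m := by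
        rw [← hfrT]
        calc Module.finrank ℂ (LinearMap.range (Aᵀ).mulVecLin)
            ≤ Module.finrank ℂ (Fin m → ℂ) := Submodule.finrank_le _
          _ = m := Module.finrank_fin_fun ℂ
      have hlt : A.rank < m := by
        rcases lt_or_ge A.rank m with h' | h'
        · exact h'
        · exfalso
          apply htop
          apply Submodule.eq_top_of_finrank_eq
          rw [Module.finrank_fin_fun, hfrT]
          omega
      have hrA : A.rank = m - 1 := by omega
      -- kernel of A.mulVecLin is nontrivial
      have hfrA : Module.finrank ℂ (LinearMap.range A.mulVecLin) = A.rank := rfl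
      have hrnA := LinearMap.finrank_range_add_finrank_ker A.mulVecLin
      rw [Module.finrank_fin_fun] at hrnA
      have hkerne : LinearMap.ker A.mulVecLin ≠ ⊥ := by
        intro hbot
        rw [hbot, finrank_bot] at hrnA
        omega
      obtain ⟨f, hfmem, hf0⟩ := Submodule.exists_mem_ne_zero_of_ne_bot hkerne
      have hAf : A *ᵥ f = 0 := hfmem
      obtain ⟨i, hfi⟩ : ∃ i, f i ≠ 0 := Function.ne_iff.mp hf0
      refine ⟨f, Pi.single i (f i)⁻¹, Or.inr ?_, ?_⟩
      · rw [dotProduct_single, mul_inv_cancel₀ hfi]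
      · -- range (Aᵀ).mulVecLin = ker of the functional x ↦ f ⬝ᵥ x
        set L : (Fin m → ℂ) →ₗ[ℂ] ℂ :=
          { toFun := fun x => f ⬝ᵥ x
            map_add' := fun a b => dotProduct_add f a b
            map_smul' := fun c a => dotProduct_smul c f a } with hL
        have hle : LinearMap.range (Aᵀ).mulVecLin ≤ LinearMap.ker L := by
          rintro _ ⟨y, rfl⟩
          simp only [LinearMap.mem_ker, hL, LinearMap.coe_mk, AddHom.coe_mk,
            mulVecLin_apply]
          rw [dotProduct_mulVec, vecMul_transpose, hAf, zero_dotProduct]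
        have hLsurj : LinearMap.range L = ⊤ := by
          rw [LinearMap.range_eq_top]
          intro c
          refine ⟨Pi.single i ((f i)⁻¹ * c), ?_⟩
          simp only [hL, LinearMap.coe_mk, AddHom.coe_mk]
          rw [dotProduct_single, ← mul_assoc, mul_inv_cancel₀ hfi, one_mul]
        have hrnL := LinearMap.finrank_range_add_finrank_ker L
        rw [Module.finrank_fin_fun, hLsurj, finrank_top, Module.finrank_self] at hrnL
        have heq : LinearMap.range (Aᵀ).mulVecLin = LinearMap.ker L := by
          apply Submodule.eq_of_le_of_finrank_le hle
          rw [hfrT, hrT]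
          omega
        intro x hx
        rw [heq]
        exact hx
  set w : Fin m → ℂ := Cᵀ *ᵥ f with hw
  set M : Matrix (Fin m) (Fin m) ℂ := (2:ℂ)⁻¹ • (C - vecMulVec w u - vecMulVec u w) with hM
  have hvc : f ᵥ* C = Cᵀ *ᵥ f := by
    rw [← vecMul_transpose Cᵀ f, transpose_transpose]
  have hfw : f ⬝ᵥ w = 0 := by
    have h1 : f ⬝ᵥ (C *ᵥ f) = f ⬝ᵥ (Cᵀ *ᵥ f) := by
      rw [dotProduct_mulVec, hvc, dotProduct_comm]
    have h2 : f ⬝ᵥ (Cᵀ *ᵥ f) = -(f ⬝ᵥ (C *ᵥ f)) := by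
      rw [hC, neg_mulVec, dotProduct_neg]
    rw [h1] at h2
    rw [hw]
    linear_combination h2 / 2
  have hMskew : M - Mᵀ = C := by
    rw [hM, transpose_smul, transpose_sub, transpose_sub, hC,
      vecMulVec_transpose', vecMulVec_transpose', ← smul_sub]
    have hexp : C - vecMulVec w u - vecMulVec u w - (-C - vecMulVec u w - vecMulVec w u)
        = C + C := by abel
    rw [hexp, ← two_smul ℂ C, smul_smul, inv_mul_cancel₀ two_ne_zero, one_smul]
  have hfM : f ᵥ* M = 0 := by
    rcases hfu with hf0 | hfu1
    · rw [hf0, zero_vecMul]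
    · rw [hM, vecMul_smul_mat, vecMul_sub, vecMul_sub, hvc,
        vecMul_vecMulVec', vecMul_vecMulVec', hfw, hfu1, zero_smul, one_smul, ← hw]
      simp
  have hcol : ∀ j, ∃ v : ι → ℂ, (Aᵀ).mulVecLin v = fun i => M i j := by
    intro j
    have hmem : (fun i => M i j) ∈ LinearMap.range (Aᵀ).mulVecLin := by
      apply hker
      have := congrFun hfM j
      simpa [vecMul, dotProduct] using this
    exact hmem
  choose g hg using hcol
  refine ⟨Matrix.of fun i j => g j i, ?_⟩
  have hAX : Aᵀ * (Matrix.of fun i j => g j i) = M := by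
    ext i j
    have := congrFun (hg j) i
    simpa [mulVecLin_apply, Matrix.mul_apply, mulVec, vecMul, dotProduct, mul_comm] using this
  have hXA : (Matrix.of fun i j => g j i)ᵀ * A = Mᵀ := by
    rw [← transpose_transpose A, ← transpose_mul, hAX]
  rw [hAX, hXA, hMskew]

/-- For `n = 2h` even, `Ω` the standard symplectic matrix and `1 ≤ m ≤ n + 1`, the map
`B ↦ AᵀΩB + BᵀΩA` on `n × m` complex matrices is surjective onto the skew-symmetric `m × m`
matrices if and only if `rank A ≥ m - 1`. -/
theorem surjective_onto_skew_iff_rank_ge {h m : ℕ} (hm : 1 ≤ m) (hmn : m ≤ 2 * h + 1)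
    (A : Matrix (Fin h ⊕ Fin h) (Fin m) ℂ) :
    (∀ C : Matrix (Fin m) (Fin m) ℂ, Cᵀ = -C →
      ∃ B : Matrix (Fin h ⊕ Fin h) (Fin m) ℂ,
        Aᵀ * stdSymplectic h * B + Bᵀ * stdSymplectic h * A = C) ↔ m - 1 ≤ A.rank := by
  have hOt := stdSymplectic_transpose h
  have hO2 := stdSymplectic_sq h
  constructor
  · intro hs
    by_contra hlt
    push_neg at hlt
    have hm2 : 2 ≤ m := by omega
    have hfrA : Module.finrank ℂ (LinearMap.range A.mulVecLin) = A.rank := rfl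
    have hrnA := LinearMap.finrank_range_add_finrank_ker A.mulVecLin
    rw [Module.finrank_fin_fun] at hrnA
    set K := LinearMap.ker A.mulVecLin with hK
    have hk2 : 2 ≤ Module.finrank ℂ K := by omega
    let b := Module.finBasis ℂ K
    let i0 : Fin (Module.finrank ℂ K) := ⟨0, by omega⟩
    let i1 : Fin (Module.finrank ℂ K) := ⟨1, by omega⟩
    have hne : i0 ≠ i1 := by simp [i0, i1, Fin.ext_iff]
    set x : Fin m → ℂ := (b i0 : Fin m → ℂ) with hxdef
    set y : Fin m → ℂ := (b i1 : Fin m → ℂ) with hydef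
    have hx : A *ᵥ x = 0 := LinearMap.mem_ker.mp (b i0).2
    have hy : A *ᵥ y = 0 := LinearMap.mem_ker.mp (b i1).2
    have hli : ∀ s t : ℂ, s • x + t • y = 0 → s = 0 ∧ t = 0 := by
      intro s t hst
      have hin : s • b i0 + t • b i1 = 0 := by
        rw [← Submodule.coe_eq_zero]
        simpa using hst
      have hsum : ∑ i, (if i = i0 then s else if i = i1 then t else 0) • b i = 0 := by
        have hterm : ∀ i, (if i = i0 then s else if i = i1 then t else 0) • b i
            = (if i = i0 then s • b i else 0) + (if i = i1 then t • b i else 0) := by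
          intro i
          by_cases h0 : i = i0
          · subst h0; simp [hne]
          · by_cases h1 : i = i1 <;> simp [h0, h1, Ne.symm hne]
        rw [Finset.sum_congr rfl (fun i _ => hterm i), Finset.sum_add_distrib]
        simpa [Finset.sum_ite_eq'] using hin
      have hg := Fintype.linearIndependent_iff.mp b.linearIndependent
        (fun i => if i = i0 then s else if i = i1 then t else 0) hsum
      constructor
      · simpa using hg i0
      · have := hg i1
        simpa [hne.symm] using this
    have hy0 : y ≠ 0 := by
      intro hy0
      have := (hli 0 1 (by simp [hy0])).2
      exact one_ne_zero this
    obtain ⟨j, hyj⟩ : ∃ j, y j ≠ 0 := Function.ne_iff.mp hy0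
    have key : ∀ a : Fin m → ℂ, (x ⬝ᵥ a) * y j - x j * (a ⬝ᵥ y) = 0 := by
      intro a
      set p : Fin m → ℂ := Pi.single j 1 with hp
      set Cm := vecMulVec a p - vecMulVec p a with hCmdef
      have hCm : Cmᵀ = -Cm := by
        rw [hCmdef, transpose_sub, vecMulVec_transpose', vecMulVec_transpose']
        exact (neg_sub _ _).symm
      obtain ⟨B, hB⟩ := hs Cm hCm
      have h1 : x ⬝ᵥ ((Aᵀ * stdSymplectic h * B) *ᵥ y) = 0 := by
        rw [Matrix.mul_assoc, dotProduct_mulVec, ← vecMul_vecMul, vecMul_transpose, hx,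
          zero_vecMul, zero_dotProduct]
      have h2 : x ⬝ᵥ ((Bᵀ * stdSymplectic h * A) *ᵥ y) = 0 := by
        rw [← mulVec_mulVec, hy, mulVec_zero, dotProduct_zero]
      have h3 : x ⬝ᵥ (Cm *ᵥ y) = 0 := by
        rw [← hB, add_mulVec, dotProduct_add, h1, h2, add_zero]
      rw [hCmdef, sub_mulVec, dotProduct_sub, dot_vecMulVec_mulVec,
        dot_vecMulVec_mulVec, hp, single_dotProduct, dotProduct_single,
        one_mul, mul_one] at h3
      exact h3
    have hxy : (y j) • x + (-(x j)) • y = 0 := by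
      ext i
      have hk := key (Pi.single i 1)
      rw [dotProduct_single, single_dotProduct, mul_one, one_mul] at hk
      simp only [Pi.add_apply, Pi.smul_apply, smul_eq_mul, Pi.zero_apply]
      linear_combination hk
    exact hyj (hli _ _ hxy).1
  · intro hrk C hC
    obtain ⟨X, hX⟩ := exists_skew_decomp hm A hrk C hC
    refine ⟨-(stdSymplectic h * X), ?_⟩
    have e1 : Aᵀ * stdSymplectic h * -(stdSymplectic h * X) = Aᵀ * X := by
      have hin : stdSymplectic h * (stdSymplectic h * X) = -X := by
        rw [← Matrix.mul_assoc, hO2, Matrix.neg_mul, Matrix.one_mul]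
      rw [Matrix.mul_neg, Matrix.mul_assoc, hin, Matrix.mul_neg, neg_neg]
    have e2 : (-(stdSymplectic h * X))ᵀ * stdSymplectic h * A = -(Xᵀ * A) := by
      have hin : stdSymplectic h * (stdSymplectic h * A) = -A := by
        rw [← Matrix.mul_assoc, hO2, Matrix.neg_mul, Matrix.one_mul]
      rw [transpose_neg, transpose_mul, hOt]
      simp only [Matrix.mul_neg, Matrix.neg_mul, neg_neg, Matrix.mul_assoc]
      rw [hin, Matrix.mul_neg]
    rw [e1, e2, ← hX]
    abel
end

section
/- Let n be even, let Ω be the standard symplectic n×n matrix with block form [[0, I],[−I, 0]] (I the identity of size n/2), and let 1 ≤ m ≤ n+1. Then every skew-symmetric m×m complex matrix C (Cᵀ = −C) can be written as C = AᵀΩA for some n×m complex matrix A with rank A = rank C. -/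
open Matrix

lemma form_apply {r m : ℕ} (A : Matrix (Fin r ⊕ Fin r) (Fin m) ℂ) (k l : Fin m) :
    (Aᵀ * stdSymplectic r * A) k l
      = ∑ i : Fin r,
          (A (Sum.inl i) k * A (Sum.inr i) l - A (Sum.inr i) k * A (Sum.inl i) l) := by
  simp [Matrix.mul_apply, stdSymplectic, Fintype.sum_sum_type, Matrix.one_apply,
    Finset.mul_sum, Finset.sum_mul, mul_ite, ite_mul, Finset.sum_sub_distrib, mul_comm]
  ring

lemma rank_step {m : ℕ} (C : Matrix (Fin m) (Fin m) ℂ) (hC : Cᵀ = -C) {i j : Fin m}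
    (hc : C i j ≠ 0) :
    C.rank
      = (C - Matrix.of fun k l => (C i j)⁻¹ * (C k i * C l j - C k j * C l i)).rank + 2 := by
  have hskew : ∀ k l, C l k = -C k l := by
    intro k l
    have := congrFun (congrFun hC k) l
    simpa using this
  have hii : ∀ k, C k k = 0 := by
    intro k
    have := hskew k k
    linear_combination this / 2
  set c := C i j with hcdef
  set x : Fin m → ℂ := fun k => C k i with hx
  set y : Fin m → ℂ := fun k => C k j with hy
  set D := C - Matrix.of fun k l => c⁻¹ * (C k i * C l j - C k j * C l i) with hD
  have hDi : ∀ k, D i k = 0 := by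
    intro k
    have h1 := hii i
    have h2 := hskew k i
    simp only [hD, Matrix.sub_apply, Matrix.of_apply]
    field_simp
    linear_combination c * h2 - C k j * h1
  have hDj : ∀ k, D j k = 0 := by
    intro k
    have h1 := hii j
    have h2 := hskew k j
    have h3 := hskew i j
    simp only [hD, Matrix.sub_apply, Matrix.of_apply]
    field_simp
    linear_combination c * h2 + C k i * h1 - C k j * h3
  have hMv : ∀ v : Fin m → ℂ,
      (Matrix.of fun k l => c⁻¹ * (C k i * C l j - C k j * C l i)) *ᵥ v
        = (c⁻¹ * (y ⬝ᵥ v)) • x - (c⁻¹ * (x ⬝ᵥ v)) • y := by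
    intro v
    funext k
    simp only [Matrix.mulVec, dotProduct, Matrix.of_apply, Pi.sub_apply, Pi.smul_apply,
      smul_eq_mul, hx, hy, Finset.mul_sum]
    rw [Finset.sum_mul, Finset.sum_mul, ← Finset.sum_sub_distrib]
    exact Finset.sum_congr rfl fun l _ => by ring
  have hxV : x ∈ LinearMap.range C.mulVecLin := by
    refine ⟨Pi.single i 1, ?_⟩
    funext k
    simp [Matrix.mulVecLin_apply, Matrix.mulVec_single, hx]
  have hyV : y ∈ LinearMap.range C.mulVecLin := by
    refine ⟨Pi.single j 1, ?_⟩
    funext k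
    simp [Matrix.mulVecLin_apply, Matrix.mulVec_single, hy]
  have hVWS : LinearMap.range C.mulVecLin
      = LinearMap.range D.mulVecLin ⊔ Submodule.span ℂ {x, y} := by
    apply le_antisymm
    · rintro z ⟨v, rfl⟩
      have hz : C.mulVecLin v = D.mulVecLin v
          + ((c⁻¹ * (y ⬝ᵥ v)) • x - (c⁻¹ * (x ⬝ᵥ v)) • y) := by
        simp only [Matrix.mulVecLin_apply, ← hMv v, hD]
        rw [Matrix.sub_mulVec]
        abel
      rw [hz]
      refine Submodule.add_mem _ (Submodule.mem_sup_left ⟨v, rfl⟩) (Submodule.mem_sup_right ?_)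
      exact Submodule.sub_mem _
        (Submodule.smul_mem _ _ (Submodule.subset_span (Set.mem_insert _ _)))
        (Submodule.smul_mem _ _ (Submodule.subset_span (Set.mem_insert_of_mem _ rfl)))
    · refine sup_le ?_ ?_
      · rintro z ⟨v, rfl⟩
        have hz : D.mulVecLin v = C.mulVecLin v
            - ((c⁻¹ * (y ⬝ᵥ v)) • x - (c⁻¹ * (x ⬝ᵥ v)) • y) := by
          simp only [Matrix.mulVecLin_apply, ← hMv v, hD]
          rw [Matrix.sub_mulVec]
        rw [hz]
        exact Submodule.sub_mem _ ⟨v, rfl⟩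
          (Submodule.sub_mem _ (Submodule.smul_mem _ _ hxV) (Submodule.smul_mem _ _ hyV))
      · rw [Submodule.span_le]
        rintro z (rfl | rfl)
        · exact hxV
        · exact hyV
  have hWS : LinearMap.range D.mulVecLin ⊓ Submodule.span ℂ {x, y} = ⊥ := by
    rw [eq_bot_iff]
    rintro z ⟨hzW, hzS⟩
    obtain ⟨v, rfl⟩ := hzW
    obtain ⟨s, t, hst⟩ := Submodule.mem_span_pair.mp hzS
    have hzi : D.mulVecLin v i = 0 := by
      simp only [Matrix.mulVecLin_apply, Matrix.mulVec, dotProduct]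
      exact Finset.sum_eq_zero fun l _ => by rw [hDi l]; ring
    have hzj : D.mulVecLin v j = 0 := by
      simp only [Matrix.mulVecLin_apply, Matrix.mulVec, dotProduct]
      exact Finset.sum_eq_zero fun l _ => by rw [hDj l]; ring
    have hi' := congrFun hst i
    have hj' := congrFun hst j
    simp only [Pi.add_apply, Pi.smul_apply, smul_eq_mul, hx, hy, hii i, hii j] at hi' hj'
    rw [hzi] at hi'
    rw [hzj] at hj'
    have ht : t = 0 := by
      have : t * c = 0 := by linear_combination t * hcdef + hi'
      exact (mul_eq_zero.mp this).resolve_right hc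
    have hs : s = 0 := by
      have h3 := hskew i j
      have : s * c = 0 := by linear_combination s * hcdef - hj' + s * h3
      exact (mul_eq_zero.mp this).resolve_right hc
    rw [Submodule.mem_bot, ← hst, ht, hs]
    simp
  have hli : LinearIndependent ℂ ![x, y] := by
    rw [LinearIndependent.pair_iff]
    intro s t hst
    have hi' := congrFun hst i
    have hj' := congrFun hst j
    simp only [Pi.add_apply, Pi.smul_apply, smul_eq_mul, hx, hy, Pi.zero_apply] at hi' hj'
    have h3 := hskew i j
    have ht : t = 0 := by
      have : t * c = 0 := by rw [hii i] at hi'; linear_combination t * hcdef + hi'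
      exact (mul_eq_zero.mp this).resolve_right hc
    have hs : s = 0 := by
      have : s * c = 0 := by linear_combination s * hcdef - hj' + s * h3 + t * hii j
      exact (mul_eq_zero.mp this).resolve_right hc
    exact ⟨hs, ht⟩
  have hS2 : Module.finrank ℂ (Submodule.span ℂ ({x, y} : Set (Fin m → ℂ))) = 2 := by
    have h1 := finrank_span_eq_card hli
    have h2 : Set.range ![x, y] = ({x, y} : Set (Fin m → ℂ)) := by
      rw [Set.pair_comm x y]
      simp [Matrix.range_cons, Matrix.range_empty]
    rw [h2] at h1
    simpa using h1
  have hkey := Submodule.finrank_sup_add_finrank_inf_eq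
    (LinearMap.range D.mulVecLin) (Submodule.span ℂ ({x, y} : Set (Fin m → ℂ)))
  rw [hWS, finrank_bot, add_zero, hS2] at hkey
  show Module.finrank ℂ (LinearMap.range C.mulVecLin) = _
  rw [hVWS, hkey]
  rfl

lemma key : ∀ (n : ℕ) {m : ℕ} (C : Matrix (Fin m) (Fin m) ℂ), Cᵀ = -C → C.rank ≤ n →
    ∃ (r : ℕ) (A : Matrix (Fin r ⊕ Fin r) (Fin m) ℂ),
      Aᵀ * stdSymplectic r * A = C ∧ 2 * r = C.rank := by
  intro n
  induction n with
  | zero =>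
    intro m C hC hn
    by_cases hC0 : C = 0
    · refine ⟨0, 0, by simp [hC0], ?_⟩
      rw [hC0, Matrix.rank_zero]
    · exfalso
      have : ∃ i j, C i j ≠ 0 := by
        by_contra h
        push_neg at h
        exact hC0 (by ext i j; simpa using h i j)
      obtain ⟨i, j, hc⟩ := this
      have := rank_step C hC hc
      omega
  | succ n ih =>
    intro m C hC hn
    by_cases hC0 : C = 0
    · refine ⟨0, 0, by simp [hC0], ?_⟩
      rw [hC0, Matrix.rank_zero]
    · have : ∃ i j, C i j ≠ 0 := by
        by_contra h
        push_neg at h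
        exact hC0 (by ext i j; simpa using h i j)
      obtain ⟨i, j, hc⟩ := this
      have hskew : ∀ k l, C l k = -C k l := by
        intro k l
        have := congrFun (congrFun hC k) l
        simpa using this
      set D := C - Matrix.of fun k l => (C i j)⁻¹ * (C k i * C l j - C k j * C l i) with hD
      have hrk : C.rank = D.rank + 2 := rank_step C hC hc
      have hDskew : Dᵀ = -D := by
        ext k l
        simp only [hD, Matrix.transpose_apply, Matrix.neg_apply, Matrix.sub_apply,
          Matrix.of_apply]
        linear_combination hskew k l
      obtain ⟨r', A', hA', hr'⟩ := ih D hDskew (by omega)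
      set a : Fin m → ℂ := fun k => C k i with ha
      set b : Fin m → ℂ := fun k => (C i j)⁻¹ * C k j with hb
      set A : Matrix (Fin (r' + 1) ⊕ Fin (r' + 1)) (Fin m) ℂ :=
        Matrix.of (Sum.elim (Fin.snoc (fun t => A' (Sum.inl t)) a)
          (Fin.snoc (fun t => A' (Sum.inr t)) b)) with hA
      refine ⟨r' + 1, A, ?_, by omega⟩
      ext k l
      rw [form_apply, Fin.sum_univ_castSucc]
      have e1 : ∀ (t : Fin r') (k : Fin m), A (Sum.inl t.castSucc) k = A' (Sum.inl t) k := by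
        intro t k; simp [hA, Fin.snoc_castSucc]
      have e2 : ∀ (t : Fin r') (k : Fin m), A (Sum.inr t.castSucc) k = A' (Sum.inr t) k := by
        intro t k; simp [hA, Fin.snoc_castSucc]
      have e3 : ∀ k : Fin m, A (Sum.inl (Fin.last r')) k = a k := by
        intro k; simp [hA]
      have e4 : ∀ k : Fin m, A (Sum.inr (Fin.last r')) k = b k := by
        intro k; simp [hA]
      have hsum : ∑ t : Fin r',
          (A (Sum.inl t.castSucc) k * A (Sum.inr t.castSucc) l
            - A (Sum.inr t.castSucc) k * A (Sum.inl t.castSucc) l) = D k l := by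
        have h5 : ∑ t : Fin r',
            (A (Sum.inl t.castSucc) k * A (Sum.inr t.castSucc) l
              - A (Sum.inr t.castSucc) k * A (Sum.inl t.castSucc) l)
            = ∑ t : Fin r',
            (A' (Sum.inl t) k * A' (Sum.inr t) l - A' (Sum.inr t) k * A' (Sum.inl t) l) :=
          Finset.sum_congr rfl fun t _ => by rw [e1 t k, e1 t l, e2 t k, e2 t l]
        rw [h5, ← form_apply A' k l, hA']
      rw [hsum, e3 k, e3 l, e4 k, e4 l]
      simp only [hD, Matrix.sub_apply, Matrix.of_apply, ha, hb]
      have h4 : (C i j)⁻¹ * C i j = 1 := inv_mul_cancel₀ hc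
      ring

/-- For `n = 2h` even, `Ω` the standard symplectic matrix and `1 ≤ m ≤ n + 1`, every
skew-symmetric `m × m` complex matrix `C` can be written as `C = AᵀΩA` for some `n × m`
matrix `A` with `rank A = rank C`. -/
theorem skew_eq_transpose_symplectic_mul {h m : ℕ} (hm : 1 ≤ m) (hmn : m ≤ 2 * h + 1)
    (C : Matrix (Fin m) (Fin m) ℂ) (hC : Cᵀ = -C) :
    ∃ A : Matrix (Fin h ⊕ Fin h) (Fin m) ℂ,
      Aᵀ * stdSymplectic h * A = C ∧ A.rank = C.rank := by
  obtain ⟨r, A, hA, hr⟩ := key C.rank C hC le_rfl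
  have hrank_le : C.rank ≤ m := by
    simpa using Matrix.rank_le_card_width C
  have hrh : r ≤ h := by omega
  set E₀ : Matrix (Fin h) (Fin r) ℂ :=
    Matrix.of fun k t => if k = Fin.castLE hrh t then 1 else 0 with hE₀
  set E : Matrix (Fin h ⊕ Fin h) (Fin r ⊕ Fin r) ℂ :=
    Matrix.fromBlocks E₀ 0 0 E₀ with hE
  have hE0 : E₀ᵀ * E₀ = 1 := by
    ext s t
    simp only [Matrix.mul_apply, Matrix.transpose_apply, hE₀, Matrix.of_apply,
      Matrix.one_apply, ite_mul, one_mul, zero_mul]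
    rw [Finset.sum_ite_eq' Finset.univ (Fin.castLE hrh s)]
    simp [Fin.castLE_inj, eq_comm]
  have hEE : Eᵀ * stdSymplectic h * E = stdSymplectic r := by
    simp only [hE, stdSymplectic, Matrix.fromBlocks_transpose, Matrix.fromBlocks_multiply]
    simp [hE0, Matrix.neg_mul, Matrix.mul_neg]
  have hB1 : (E * A)ᵀ * stdSymplectic h * (E * A) = C := by
    rw [Matrix.transpose_mul]
    calc Aᵀ * Eᵀ * stdSymplectic h * (E * A)
        = Aᵀ * (Eᵀ * stdSymplectic h * E) * A := by
          simp only [Matrix.mul_assoc]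
      _ = C := by rw [hEE, hA]
  refine ⟨E * A, hB1, le_antisymm ?_ ?_⟩
  · calc (E * A).rank ≤ A.rank := Matrix.rank_mul_le_right E A
      _ ≤ Fintype.card (Fin r ⊕ Fin r) := Matrix.rank_le_card_height A
      _ = C.rank := by simp; omega
  · have h1 := Matrix.rank_mul_le_right ((E * A)ᵀ * stdSymplectic h) (E * A)
    rw [hB1] at h1
    exact h1
end

section
/- Let R be a commutative ring and I ⊆ R an ideal admitting an exact sequence 0 → P → Q → R → R/I → 0 of R-modules in which P and Q are finitely generated free R-modules and the map Q → R has image I. Let A be a commutative Noetherian R-algebra and set J = I·A, the ideal of A generated by the image of I. If there exist elements a, b ∈ J such that (a, b) is an A-regular sequence (a is a non-zero-divisor on A and b is a non-zero-divisor on A/aA), then the base-changed sequence 0 → A ⊗_R P → A ⊗_R Q → A → A/J → 0 is exact; in particular the map A ⊗_R P → A ⊗_R Q is injective and the image of A ⊗_R Q → A is J. -/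
open TensorProduct Pointwise

private noncomputable def homotopySection {R P Q : Type*} [CommRing R] [AddCommGroup P]
    [Module R P] [AddCommGroup Q] [Module R Q] (f : P →ₗ[R] Q) (g : Q →ₗ[R] R)
    (hf : Function.Injective f) (hfg : Function.Exact f g) (i : R) (q0 : Q) (hq0 : g q0 = i) :
    Q →ₗ[R] P :=
  (LinearEquiv.ofInjective f hf).symm.toLinearMap ∘ₗ
    ((i • LinearMap.id - (LinearMap.toSpanSingleton R Q q0) ∘ₗ g).codRestrict
      (LinearMap.range f) (fun q' => by
        rw [← (LinearMap.exact_iff.mp hfg)]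
        simp [hq0, mul_comm]))

private lemma homotopySection_spec {R P Q : Type*} [CommRing R] [AddCommGroup P]
    [Module R P] [AddCommGroup Q] [Module R Q] (f : P →ₗ[R] Q) (g : Q →ₗ[R] R)
    (hf : Function.Injective f) (hfg : Function.Exact f g) (i : R) (q0 : Q) (hq0 : g q0 = i) :
    (homotopySection f g hf hfg i q0 hq0) ∘ₗ f = i • LinearMap.id ∧
    f ∘ₗ (homotopySection f g hf hfg i q0 hq0) =
      i • LinearMap.id - (LinearMap.toSpanSingleton R Q q0) ∘ₗ g := by
  have key : ∀ q', f (homotopySection f g hf hfg i q0 hq0 q') =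
      i • q' - g q' • q0 := by
    intro q'
    have := (LinearEquiv.ofInjective f hf).apply_symm_apply
      ⟨i • q' - g q' • q0, by rw [← (LinearMap.exact_iff.mp hfg)]; simp [hq0, mul_comm]⟩
    have h2 := congrArg Subtype.val this
    simpa [homotopySection, LinearEquiv.ofInjective_apply] using h2
  constructor
  · ext p
    apply hf
    simp only [LinearMap.comp_apply, key, hfg.apply_apply_eq_zero, zero_smul, sub_zero,
      LinearMap.smul_apply, LinearMap.id_apply, map_smul]
  · ext q'
    simp [key]

private lemma kill_homology {R P Q : Type*} [CommRing R] [AddCommGroup P]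
    [Module R P] [AddCommGroup Q] [Module R Q] (f : P →ₗ[R] Q) (g : Q →ₗ[R] R)
    (hf : Function.Injective f) (hfg : Function.Exact f g)
    (A : Type*) [CommRing A] [Algebra R A] {i : R} (hi : i ∈ LinearMap.range g) :
    (∀ x : A ⊗[R] P, f.baseChange A x = 0 → algebraMap R A i • x = 0) ∧
    (∀ x : A ⊗[R] Q, g.baseChange A x = 0 →
      algebraMap R A i • x ∈ LinearMap.range (f.baseChange A)) := by
  obtain ⟨q0, hq0⟩ := hi
  obtain ⟨h1, h2⟩ := homotopySection_spec f g hf hfg i q0 hq0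
  set s := homotopySection f g hf hfg i q0 hq0
  constructor
  · intro x hx
    have := congrArg (fun φ => LinearMap.baseChange A φ x) h1
    simp only [LinearMap.baseChange_comp, LinearMap.baseChange_smul, LinearMap.baseChange_id,
      LinearMap.comp_apply, LinearMap.smul_apply, LinearMap.id_apply, hx, map_zero] at this
    rw [algebraMap_smul, ← this]
  · intro x hx
    have := congrArg (fun φ => LinearMap.baseChange A φ x) h2
    simp only [LinearMap.baseChange_comp, LinearMap.baseChange_sub, LinearMap.baseChange_smul,
      LinearMap.baseChange_id, LinearMap.comp_apply, LinearMap.smul_apply, LinearMap.id_apply,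
      LinearMap.sub_apply, hx, map_zero, sub_zero] at this
    rw [algebraMap_smul, ← this]
    exact ⟨s.baseChange A x, rfl⟩

private lemma smul_mem_of_forall_gen {R A : Type*} [CommRing R] [CommRing A] [Algebra R A]
    (I : Ideal R) {M : Type*} [AddCommGroup M] [Module A M] (x : M) (N : Submodule A M)
    (hgen : ∀ i ∈ I, (algebraMap R A i) • x ∈ N) :
    ∀ c ∈ I.map (algebraMap R A), c • x ∈ N := by
  intro c hc
  refine Submodule.span_induction ?_ ?_ ?_ ?_ hc
  · rintro _ ⟨i, hi, rfl⟩; exact hgen i hi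
  · simp
  · intro y z _ _ hy hz; rw [add_smul]; exact N.add_mem hy hz
  · intro a y _ hy; rw [smul_eq_mul, mul_smul]; exact N.smul_mem a hy

private lemma smul_eq_zero_of_basis {ι A M : Type*} [CommRing A] [AddCommGroup M] [Module A M]
    (β : Module.Basis ι A M) {a : A} (ha : IsSMulRegular A a) {x : M} (h : a • x = 0) : x = 0 := by
  apply β.repr.injective
  ext i
  apply ha
  have := congrArg (fun y => β.repr y i) h
  simpa [smul_eq_mul, mul_comm] using this

private lemma exists_smul_of_basis {ι A M : Type*} [Fintype ι] [CommRing A] [AddCommGroup M]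
    [Module A M] (β : Module.Basis ι A M) {a : A} {y : M} (h : ∀ i, a ∣ β.repr y i) :
    ∃ w, y = a • w := by
  choose c hc using h
  refine ⟨∑ i, c i • β i, ?_⟩
  rw [← β.sum_repr y, Finset.smul_sum]
  refine Finset.sum_congr rfl fun i _ => ?_
  rw [smul_smul, ← hc i]


/-- Let `0 → P → Q → R → R/I → 0` be an exact sequence of `R`-modules with `P`, `Q` finitely
generated free, and let `A` be a Noetherian commutative `R`-algebra with `J = I·A`.  If `J`
contains an `A`-regular sequence of length two, then the base-changed sequence
`0 → A ⊗ P → A ⊗ Q → A → A/J → 0` is exact: `A ⊗ P → A ⊗ Q` is injective, the sequence is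
exact at `A ⊗ Q`, and the image of `A ⊗ Q → A` is `J`. -/
theorem baseChange_resolution_exact_of_regular_sequence
    {R : Type*} [CommRing R] (I : Ideal R)
    {P Q : Type*} [AddCommGroup P] [Module R P] [AddCommGroup Q] [Module R Q]
    [Module.Free R P] [Module.Finite R P] [Module.Free R Q] [Module.Finite R Q]
    (f : P →ₗ[R] Q) (g : Q →ₗ[R] R)
    (hf : Function.Injective f)
    (hfg : Function.Exact f g)
    (hg : LinearMap.range g = I)
    (A : Type*) [CommRing A] [Algebra R A] [IsNoetherianRing A]
    (hreg : ∃ a b : A, a ∈ I.map (algebraMap R A) ∧ b ∈ I.map (algebraMap R A) ∧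
      RingTheory.Sequence.IsRegular A [a, b]) :
    Function.Injective (f.baseChange A) ∧
    Function.Exact (f.baseChange A) (g.baseChange A) ∧
    LinearMap.range ((TensorProduct.AlgebraTensorModule.rid R A A).toLinearMap ∘ₗ
      g.baseChange A) = I.map (algebraMap R A) := by
  obtain ⟨a, b, haJ, hbJ, hreg⟩ := hreg
  -- regularity facts
  have hwab : IsSMulRegular A a ∧ IsSMulRegular (QuotSMulTop a A) b := by
    have h1 := hreg.toIsWeaklyRegular
    rw [RingTheory.Sequence.isWeaklyRegular_cons_iff] at h1
    obtain ⟨h1, h2⟩ := h1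
    rw [RingTheory.Sequence.isWeaklyRegular_cons_iff] at h2
    exact ⟨h1, h2.1⟩
  obtain ⟨hwa, hwb⟩ := hwab
  have memtop : ∀ x : A, x ∈ a • (⊤ : Submodule A A) ↔ a ∣ x := by
    intro x
    rw [← Submodule.ideal_span_singleton_smul, smul_eq_mul, Ideal.mul_top,
      Ideal.mem_span_singleton]
  have hbdvd : ∀ y : A, a ∣ b * y → a ∣ y := by
    intro y hy
    have h0 : b • (Submodule.Quotient.mk y : QuotSMulTop a A) = 0 := by
      rw [← Submodule.Quotient.mk_smul, Submodule.Quotient.mk_eq_zero, smul_eq_mul, memtop]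
      exact hy
    have : (Submodule.Quotient.mk y : QuotSMulTop a A) = 0 :=
      hwb (h0.trans (smul_zero b).symm)
    rw [← memtop]
    exact (Submodule.Quotient.mk_eq_zero _).mp this
  -- killing homology
  have killP : ∀ c ∈ I.map (algebraMap R A), ∀ x : A ⊗[R] P,
      f.baseChange A x = 0 → c • x = 0 := by
    intro c hc x hx
    have := smul_mem_of_forall_gen I x (⊥ : Submodule A (A ⊗[R] P))
      (fun i hi => by
        rw [Submodule.mem_bot]
        exact (kill_homology f g hf hfg A (hg ▸ hi)).1 x hx) c hc
    simpa using this
  have killQ : ∀ c ∈ I.map (algebraMap R A), ∀ x : A ⊗[R] Q,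
      g.baseChange A x = 0 → c • x ∈ LinearMap.range (f.baseChange A) := by
    intro c hc x hx
    exact smul_mem_of_forall_gen I x (LinearMap.range (f.baseChange A))
      (fun i hi => (kill_homology f g hf hfg A (hg ▸ hi)).2 x hx) c hc
  -- bases
  let βP := Module.Free.chooseBasis A (A ⊗[R] P)
  let βQ := Module.Free.chooseBasis A (A ⊗[R] Q)
  -- injectivity
  have hzero : ∀ x : A ⊗[R] P, f.baseChange A x = 0 → x = 0 := by
    intro x hx
    exact smul_eq_zero_of_basis βP hwa (killP a haJ x hx)
  have hinj : Function.Injective (f.baseChange A) := by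
    intro x y h
    have : f.baseChange A (x - y) = 0 := by rw [map_sub, h, sub_self]
    have := hzero _ this
    rwa [sub_eq_zero] at this
  refine ⟨hinj, ?_, ?_⟩
  · -- exactness at A ⊗ Q
    rw [LinearMap.exact_iff]
    apply le_antisymm
    · rintro x hx
      rw [LinearMap.mem_ker] at hx
      obtain ⟨y, hy⟩ := killQ a haJ x hx
      obtain ⟨z, hz⟩ := killQ b hbJ x hx
      have hyz : b • y = a • z := by
        apply hinj
        rw [map_smul, map_smul, hy, hz, smul_comm]
      have hdvd : ∀ i, a ∣ βP.repr y i := by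
        intro i
        apply hbdvd
        have := congrArg (fun t => βP.repr t i) hyz
        simp only [map_smul, Finsupp.smul_apply, smul_eq_mul] at this
        exact ⟨βP.repr z i, this⟩
      obtain ⟨w, hw⟩ := exists_smul_of_basis βP hdvd
      refine ⟨w, ?_⟩
      have : a • f.baseChange A w = a • x := by
        rw [← map_smul, ← hw, hy]
      have h0 : a • (f.baseChange A w - x) = 0 := by
        rw [smul_sub, this, sub_self]
      have := smul_eq_zero_of_basis βQ hwa h0
      rwa [sub_eq_zero] at this
    · rintro _ ⟨t, rfl⟩
      rw [LinearMap.mem_ker, ← LinearMap.comp_apply, ← LinearMap.baseChange_comp]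
      have hgf : g ∘ₗ f = 0 := by
        ext p; exact hfg.apply_apply_eq_zero p
      rw [hgf, LinearMap.baseChange_zero]
      rfl
  · -- range computation
    apply le_antisymm
    · rintro _ ⟨x, rfl⟩
      rw [LinearMap.comp_apply]
      induction x using TensorProduct.induction_on with
      | zero => simpa using Ideal.zero_mem _
      | tmul aa q =>
          have : (AlgebraTensorModule.rid R A A).toLinearMap (g.baseChange A (aa ⊗ₜ q)) =
              algebraMap R A (g q) * aa := by
            simp [Algebra.smul_def]
          rw [this]
          refine Ideal.mul_mem_right aa _ (Ideal.mem_map_of_mem _ ?_)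
          rw [← hg]; exact ⟨q, rfl⟩
      | add u v hu hv =>
          rw [map_add, map_add]
          exact Ideal.add_mem _ hu hv
    · rw [Ideal.map_le_iff_le_comap]
      intro i hi
      rw [← hg] at hi
      obtain ⟨q, hq⟩ := hi
      show algebraMap R A i ∈ LinearMap.range _
      refine ⟨(1 : A) ⊗ₜ q, ?_⟩
      simp [hq, Algebra.smul_def]
end

section
/- Let n ≥ 1, let R be the polynomial ring over ℂ in n+1 variables x₁, …, x_{n+1}, and let φ₁, …, φ_n ∈ R. Let Jac(φ) be the n×(n+1) Jacobian matrix with (k,i) entry ∂φ_k/∂x_i, for 1 ≤ i ≤ n+1 let d_i be the determinant of the n×n matrix obtained from Jac(φ) by deleting column i, and let η = ∑_{i=1}^{n+1} (−1)^i d_i ∂/∂x_i ∈ Derivation ℂ R R. If the ideal of R generated by all n×n minors of Jac(φ) has height at least 2, then the R-module {D ∈ Derivation ℂ R R : D φ_k = 0 for all k = 1, …, n} of vertical derivations is free of rank 1 with generator η. -/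
open MvPolynomial

noncomputable section

/-- The height of an ideal: the infimum of the heights of the prime ideals containing it. -/
def idealHeight {R : Type*} [CommRing R] (I : Ideal R) : ℕ∞ :=
  ⨅ (p : PrimeSpectrum R) (_ : I ≤ p.asIdeal), Order.height p

/-- The `n × (n+1)` Jacobian matrix of `φ₁, …, φ_n ∈ ℂ[x₁,…,x_{n+1}]`, with `(k, i)` entry
`∂φ_k/∂x_i`. -/
def jacMatrix {n : ℕ} (φ : Fin n → MvPolynomial (Fin (n + 1)) ℂ) :
    Matrix (Fin n) (Fin (n + 1)) (MvPolynomial (Fin (n + 1)) ℂ) :=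
  Matrix.of fun k i => MvPolynomial.pderiv i (φ k)

/-- `d_i`: the determinant of the Jacobian matrix of `φ` with column `i` deleted. -/
def jacMinor {n : ℕ} (φ : Fin n → MvPolynomial (Fin (n + 1)) ℂ) (i : Fin (n + 1)) :
    MvPolynomial (Fin (n + 1)) ℂ :=
  ((jacMatrix φ).submatrix id i.succAbove).det

/-- The derivation `η = ∑ i, (-1)^i d_i ∂/∂x_i` (with `i` counted starting from `1`, i.e.
`η (x_i) = (-1)^(i+1) d_i` for `i : Fin (n+1)`). -/
def etaDerivation {n : ℕ} (φ : Fin n → MvPolynomial (Fin (n + 1)) ℂ) :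
    Derivation ℂ (MvPolynomial (Fin (n + 1)) ℂ) (MvPolynomial (Fin (n + 1)) ℂ) :=
  MvPolynomial.mkDerivation ℂ fun i => (-1) ^ ((i : ℕ) + 1) * jacMinor φ i

/-- The `ℂ[x₁,…,x_{n+1}]`-module of vertical derivations: those annihilating every `φ_k`. -/
def vertDerivations {n : ℕ} (φ : Fin n → MvPolynomial (Fin (n + 1)) ℂ) :
    Submodule (MvPolynomial (Fin (n + 1)) ℂ)
      (Derivation ℂ (MvPolynomial (Fin (n + 1)) ℂ) (MvPolynomial (Fin (n + 1)) ℂ)) where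
  carrier := {D | ∀ k, D (φ k) = 0}
  add_mem' := fun ha hb k => by rw [Derivation.add_apply, ha k, hb k, add_zero]
  zero_mem' := fun k => by rw [Derivation.zero_apply]
  smul_mem' := fun r D hD k => by rw [Derivation.smul_apply, hD k, smul_zero]

open Matrix

/-- Chain rule: a `ℂ`-derivation on a polynomial ring is given by its values on the variables. -/
private lemma chainRule {m : ℕ}
    (D : Derivation ℂ (MvPolynomial (Fin m) ℂ) (MvPolynomial (Fin m) ℂ))
    (p : MvPolynomial (Fin m) ℂ) :
    D p = ∑ i, pderiv i p * D (X i) := by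
  classical
  induction p using MvPolynomial.induction_on with
  | C a => simp
  | add p q hp hq => simp [hp, hq, Finset.sum_add_distrib, add_mul]
  | mul_X p i hp =>
    have h2 : (∑ j, p * pderiv j (X i) * D (X j)) = p * D (X i) := by
      rw [Finset.sum_eq_single i]
      · simp
      · intro j _ hj
        rw [pderiv_X_of_ne (Ne.symm hj)]
        ring
      · simp
    rw [D.leibniz, hp, smul_eq_mul, smul_eq_mul]
    simp only [pderiv_mul, add_mul, Finset.sum_add_distrib]
    rw [h2, Finset.mul_sum]
    rw [add_comm]
    congr 1
    apply Finset.sum_congr rfl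
    intro j _
    ring

/-- Core UFD divisibility lemma. -/
private lemma dvd_of_proportional {S : Type*} [CommRing S] [IsDomain S]
    [UniqueFactorizationMonoid S] {ι : Type*} (v : ι → S)
    (hv : ∀ p : S, Prime p → ∃ i, ¬ p ∣ v i) (hv0 : ∃ i, v i ≠ 0)
    (g b : S) (a : ι → S) (h : ∀ i, g * a i = b * v i) : g ∣ b := by
  induction g using UniqueFactorizationMonoid.induction_on_prime generalizing b a with
  | h₁ =>
    obtain ⟨i0, hi0⟩ := hv0
    have h0 := (h i0).symm
    rw [zero_mul] at h0
    rcases mul_eq_zero.mp h0 with h' | h'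
    · rw [h']
    · exact absurd h' hi0
  | h₂ x hx => exact hx.dvd
  | h₃ a' p ha' hp ih =>
    obtain ⟨i, hi⟩ := hv p hp
    have hpb : p ∣ b := by
      have hd : p ∣ b * v i := ⟨a' * a i, by rw [← h i]; ring⟩
      exact (hp.dvd_mul.mp hd).resolve_right hi
    obtain ⟨c, rfl⟩ := hpb
    have h' : ∀ j, a' * a j = c * v j := fun j =>
      mul_left_cancel₀ hp.ne_zero (by rw [← mul_assoc, ← mul_assoc]; exact h j)
    exact mul_dvd_mul_left p (ih c a h')

variable {n : ℕ}

/-- The vector of signed minors is in the kernel of the Jacobian (Laplace expansion). -/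
private lemma eta_vec_ker (φ : Fin n → MvPolynomial (Fin (n + 1)) ℂ) (k : Fin n) :
    ∑ i, pderiv i (φ k) *
      ((-1 : MvPolynomial (Fin (n + 1)) ℂ) ^ ((i : ℕ) + 1) * jacMinor φ i) = 0 := by
  classical
  set J := jacMatrix φ with hJ
  set B : Matrix (Fin (n + 1)) (Fin (n + 1)) (MvPolynomial (Fin (n + 1)) ℂ) :=
    Matrix.of (Fin.cons (J k) J) with hB
  have hdet : B.det = 0 := by
    refine Matrix.det_zero_of_row_eq (i := 0) (j := k.succ) (Fin.succ_ne_zero k).symm ?_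
    funext i
    simp [hB]
    rfl
  have hexp := Matrix.det_succ_row_zero B
  rw [hdet] at hexp
  have hsub : ∀ j : Fin (n + 1),
      (B.submatrix Fin.succ j.succAbove).det = jacMinor φ j := by
    intro j
    have : B.submatrix Fin.succ j.succAbove = J.submatrix id j.succAbove := by
      funext k' i'
      simp [hB, Matrix.submatrix_apply]
      rfl
    rw [this, jacMinor, hJ]
  calc ∑ i, pderiv i (φ k) * ((-1 : MvPolynomial (Fin (n + 1)) ℂ) ^ ((i : ℕ) + 1) * jacMinor φ i)
      = ∑ i : Fin (n + 1), -((-1) ^ (i : ℕ) * B 0 i * (B.submatrix Fin.succ i.succAbove).det) := by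
        refine Finset.sum_congr rfl fun i _ => ?_
        rw [hsub i]
        have hB0 : B 0 i = pderiv i (φ k) := by simp [hB, hJ, jacMatrix]; rfl
        rw [hB0, pow_succ]
        ring
    _ = -∑ i : Fin (n + 1), (-1) ^ (i : ℕ) * B 0 i * (B.submatrix Fin.succ i.succAbove).det := by
        rw [Finset.sum_neg_distrib]
    _ = 0 := by rw [← hexp, neg_zero]

/-- Cramer-type relation for kernel vectors. -/
private lemma cross (φ : Fin n → MvPolynomial (Fin (n + 1)) ℂ)
    (a : Fin (n + 1) → MvPolynomial (Fin (n + 1)) ℂ)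
    (ha : ∀ k, ∑ i, jacMatrix φ k i * a i = 0) (j : Fin (n + 1)) (i' : Fin n) :
    jacMinor φ j * a (j.succAbove i') =
      -(a j) * ((((jacMatrix φ).submatrix id j.succAbove).adjugate) *ᵥ
        (fun k => jacMatrix φ k j)) i' := by
  classical
  set J := jacMatrix φ with hJ
  set A : Matrix (Fin n) (Fin n) (MvPolynomial (Fin (n + 1)) ℂ) := J.submatrix id j.succAbove
    with hA
  set x : Fin n → MvPolynomial (Fin (n + 1)) ℂ := fun i' => a (j.succAbove i') with hx
  have hmv : A *ᵥ x = fun k => -(a j) * J k j := by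
    funext k
    have h0 := Fin.sum_univ_succAbove (fun i => J k i * a i) j
    rw [ha k] at h0
    have hsum : (∑ i' : Fin n, J k (j.succAbove i') * a (j.succAbove i'))
        = -(J k j * a j) := eq_neg_of_add_eq_zero_right h0.symm
    simp only [Matrix.mulVec, dotProduct, hA, hx, Matrix.submatrix_apply, id_eq]
    rw [hsum]
    ring
  have key : A.det • x = A.adjugate *ᵥ (A *ᵥ x) := by
    rw [Matrix.mulVec_mulVec, Matrix.adjugate_mul, Matrix.smul_mulVec, Matrix.one_mulVec]
  have key' := congrFun key i'
  rw [hmv] at key'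
  have : (fun k => -(a j) * J k j) = (-(a j)) • (fun k => J k j) := by
    funext k; simp [smul_eq_mul]
  rw [this, Matrix.mulVec_smul] at key'
  simpa [jacMinor, smul_eq_mul, hA, hJ] using key'

private lemma height_facts {R' : Type*} [CommRing R'] [IsDomain R']
    [UniqueFactorizationMonoid R'] {ι : Type*} (d : ι → R')
    (hht : 2 ≤ idealHeight (Ideal.span (Set.range d))) :
    (∃ i, d i ≠ 0) ∧ (∀ p : R', Prime p → ∃ i, ¬ p ∣ d i) := by
  classical
  have hne : ∀ (P : Ideal R') (hP : P.IsPrime), Ideal.span (Set.range d) ≤ P →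
      2 ≤ Order.height (⟨P, hP⟩ : PrimeSpectrum R') := by
    intro P hP hle
    refine le_trans hht ?_
    exact iInf_le_of_le ⟨P, hP⟩ (iInf_le _ hle)
  constructor
  · by_contra h
    push_neg at h
    have hle : Ideal.span (Set.range d) ≤ (⊥ : Ideal R') := by
      rw [Ideal.span_le]
      rintro x ⟨i, rfl⟩
      simp [h i]
    have h2 := hne ⊥ Ideal.bot_prime hle
    have h0 : Order.height (⟨⊥, Ideal.bot_prime⟩ : PrimeSpectrum R') = 0 := by
      rw [Order.height_eq_zero]
      intro q _
      exact (bot_le : (⊥ : Ideal R') ≤ q.asIdeal)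
    rw [h0] at h2
    exact absurd h2 (by decide)
  · intro p hp
    by_contra h
    push_neg at h
    have hP : (Ideal.span {p}).IsPrime := (Ideal.span_singleton_prime hp.ne_zero).mpr hp
    have hle : Ideal.span (Set.range d) ≤ Ideal.span {p} := by
      rw [Ideal.span_le]
      rintro x ⟨i, rfl⟩
      exact Ideal.mem_span_singleton.mpr (h i)
    have h2 := hne _ hP hle
    have hQ : ∀ Q : PrimeSpectrum R', Q < ⟨Ideal.span {p}, hP⟩ → Q.asIdeal = ⊥ := by
      intro Q hQlt
      by_contra hQ0
      obtain ⟨a, haQ, ha0⟩ := Submodule.exists_mem_ne_zero_of_ne_bot hQ0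
      obtain ⟨k, b, hpb, hab⟩ := WfDvdMonoid.max_power_factor ha0 hp.irreducible
      have hmem : p ^ k * b ∈ Q.asIdeal := hab ▸ haQ
      have hQle : Q.asIdeal ≤ Ideal.span {p} := le_of_lt hQlt
      rcases Q.2.mem_or_mem hmem with hpk | hb
      · have hpQ : p ∈ Q.asIdeal := Q.2.mem_of_pow_mem k hpk
        have hgeq : Ideal.span {p} ≤ Q.asIdeal :=
          (Ideal.span_singleton_le_iff_mem _).mpr hpQ
        have : Q = (⟨Ideal.span {p}, hP⟩ : PrimeSpectrum R') :=
          PrimeSpectrum.ext (le_antisymm hQle hgeq)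
        exact hQlt.ne this
      · exact hpb (Ideal.mem_span_singleton.mp (hQle hb))
    have hht1 : Order.height (⟨Ideal.span {p}, hP⟩ : PrimeSpectrum R') ≤ 1 := by
      rw [show (1 : ℕ∞) = ((1 : ℕ) : ℕ∞) from rfl, Order.height_le_coe_iff]
      intro Q hQlt
      have hbot := hQ Q hQlt
      have hmin : Order.height Q = 0 := by
        rw [Order.height_eq_zero]
        intro q' _
        show Q.asIdeal ≤ q'.asIdeal
        rw [hbot]
        exact bot_le
      rw [hmin]
      exact_mod_cast Nat.zero_lt_one
    exact absurd (le_trans h2 hht1) (by decide)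

/-- If the ideal generated by the maximal minors of the Jacobian matrix of
`φ : ℂ^{n+1} → ℂ^n` has height at least `2`, then the module of vertical derivations is free
of rank `1`, generated by `η = ∑ i, (-1)^i d_i ∂/∂x_i`. -/
theorem vertDerivations_free_rank_one {n : ℕ} (hn : 1 ≤ n)
    (φ : Fin n → MvPolynomial (Fin (n + 1)) ℂ)
    (hht : 2 ≤ idealHeight (Ideal.span (Set.range (jacMinor φ)))) :
    ∃ b : Module.Basis (Fin 1) (MvPolynomial (Fin (n + 1)) ℂ) (vertDerivations φ),
      (b 0 : Derivation ℂ (MvPolynomial (Fin (n + 1)) ℂ) (MvPolynomial (Fin (n + 1)) ℂ)) =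
        etaDerivation φ := by
  classical
  obtain ⟨⟨i0, hi0⟩, hprime⟩ := height_facts (jacMinor φ) hht
  set v : Fin (n + 1) → MvPolynomial (Fin (n + 1)) ℂ :=
    fun i => (-1) ^ ((i : ℕ) + 1) * jacMinor φ i with hv
  have hvx : ∀ i, etaDerivation φ (X i) = v i := fun i => mkDerivation_X _ _ _
  have hvi0 : v i0 ≠ 0 :=
    mul_ne_zero (pow_ne_zero _ (neg_ne_zero.mpr one_ne_zero)) hi0
  have hprime' : ∀ p : MvPolynomial (Fin (n + 1)) ℂ, Prime p → ∃ i, ¬ p ∣ v i := by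
    intro p hp
    obtain ⟨i, hi⟩ := hprime p hp
    refine ⟨i, fun hdvd => hi ?_⟩
    have hd : jacMinor φ i = (-1) ^ ((i : ℕ) + 1) * v i := by
      rw [hv]
      rw [← mul_assoc, ← pow_add, Even.neg_one_pow ⟨(i : ℕ) + 1, rfl⟩, one_mul]
    rw [hd]
    exact hdvd.mul_left _
  have hvker : ∀ k, ∑ i, jacMatrix φ k i * v i = 0 := by
    intro k
    simpa [jacMatrix] using eta_vec_ker φ k
  have hη : etaDerivation φ ∈ vertDerivations φ := by
    intro k
    rw [chainRule]
    simp only [hvx]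
    simpa [jacMatrix] using hvker k
  have hprop : ∀ (a : Fin (n + 1) → MvPolynomial (Fin (n + 1)) ℂ),
      (∀ k, ∑ i, jacMatrix φ k i * a i = 0) → ∀ i, v i0 * a i = a i0 * v i := by
    intro a ha i
    by_cases hii : i = i0
    · subst hii; ring
    · obtain ⟨i', rfl⟩ := Fin.exists_succAbove_eq hii
      apply mul_left_cancel₀ hi0
      have h1 := cross φ a ha i0 i'
      have h2 := cross φ v hvker i0 i'
      linear_combination (v i0) * h1 - (a i0) * h2
  have hgen : ∀ D ∈ vertDerivations φ, ∃ c : MvPolynomial (Fin (n + 1)) ℂ, D = c • etaDerivation φ := by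
    intro D hD
    set a : Fin (n + 1) → MvPolynomial (Fin (n + 1)) ℂ := fun i => D (X i) with hadef
    have haker : ∀ k, ∑ i, jacMatrix φ k i * a i = 0 := by
      intro k
      have hc := chainRule D (φ k)
      rw [hD k] at hc
      simpa [jacMatrix] using hc.symm
    have hdvd : v i0 ∣ a i0 :=
      dvd_of_proportional v hprime' ⟨i0, hvi0⟩ (v i0) (a i0) a (hprop a haker)
    obtain ⟨c, hc⟩ := hdvd
    have ha : ∀ i, a i = c * v i := by
      intro i
      apply mul_left_cancel₀ hvi0
      rw [hprop a haker i, hc]; ring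
    refine ⟨c, ?_⟩
    apply derivation_ext
    intro i
    rw [Derivation.smul_apply, hvx i, smul_eq_mul]
    exact ha i
  set η : vertDerivations φ := ⟨etaDerivation φ, hη⟩ with hηdef
  set f : MvPolynomial (Fin (n + 1)) ℂ →ₗ[MvPolynomial (Fin (n + 1)) ℂ] vertDerivations φ :=
    LinearMap.toSpanSingleton (MvPolynomial (Fin (n + 1)) ℂ) _ η with hf
  have hinj : Function.Injective f := by
    have h0 : ∀ r, f r = 0 → r = 0 := by
      intro r hr
      have hz : r • etaDerivation φ = 0 := congrArg Subtype.val hr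
      have h1 : (r • etaDerivation φ) (X i0) = 0 := by rw [hz]; rfl
      rw [Derivation.smul_apply, hvx i0, smul_eq_mul] at h1
      exact (mul_eq_zero.mp h1).resolve_right hvi0
    intro r s hrs
    have := h0 (r - s) (by rw [map_sub, hrs, sub_self])
    exact sub_eq_zero.mp this
  have hsurj : Function.Surjective f := by
    rintro ⟨D, hD⟩
    obtain ⟨c, rfl⟩ := hgen D hD
    exact ⟨c, rfl⟩
  set e := LinearEquiv.ofBijective f ⟨hinj, hsurj⟩ with he
  refine ⟨Module.Basis.ofRepr (e.symm.trans
    (Finsupp.LinearEquiv.finsuppUnique (MvPolynomial (Fin (n + 1)) ℂ)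
      (MvPolynomial (Fin (n + 1)) ℂ) (Fin 1)).symm), ?_⟩
  rw [Module.Basis.coe_ofRepr]
  simp only [LinearEquiv.trans_symm, LinearEquiv.symm_symm, LinearEquiv.trans_apply]
  have h1 : (Finsupp.LinearEquiv.finsuppUnique (MvPolynomial (Fin (n + 1)) ℂ)
      (MvPolynomial (Fin (n + 1)) ℂ) (Fin 1)) (Finsupp.single 0 1) = 1 := by
    simp [Finsupp.LinearEquiv.finsuppUnique]
  rw [h1]
  show ((f 1 : vertDerivations φ) : Derivation ℂ (MvPolynomial (Fin (n + 1)) ℂ)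
    (MvPolynomial (Fin (n + 1)) ℂ)) = etaDerivation φ
  rw [hf]
  simp [LinearMap.toSpanSingleton_apply, hηdef]

end
end
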